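/- arXiv:2508.04320 — 2 statements merged into one kernel-verified Lean document; each statement's English description precedes it below -/
import Mathlib

section
/- Let J = Z− and suppose the triangular system x(n+1) = (A11(n) A12(n); 0 A22(n)) x(n) admits an exponential dichotomy on Z− with projections P(n) such that d := dim ker P(0) < +∞. Then the block system x1(n+1) = A11(n) x1(n) admits an exponential dichotomy on Z−, and d1(m) := dim U1(m) satisfies d1(m) ≤ d and is independent of m ∈ Z−. -/
open Real ContinuousLinearMap

noncomputable section

universe u

variable {X : Type u} [NormedAddCommGroup X] [NormedSpace ℝ X]

/-- The cocycle associated with the system `x(n+1) = A(n) x(n)`, as a function of the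
number of steps: `cocycleAux A n k = A(n+k-1) ∘ ⋯ ∘ A(n)`. -/
def cocycleAux (A : ℤ → X →L[ℝ] X) (n : ℤ) : ℕ → (X →L[ℝ] X)
  | 0 => ContinuousLinearMap.id ℝ X
  | k + 1 => (A (n + k)).comp (cocycleAux A n k)

/-- The cocycle `Φ(m, n) = A(m-1) ⋯ A(n)` for `m > n`, and `Φ(n, n) = Id`. -/
def Phi (A : ℤ → X →L[ℝ] X) (m n : ℤ) : X →L[ℝ] X :=
  cocycleAux A n (m - n).toNat

/-- The system `x(n+1) = A(n) x(n)`, `n ∈ J'`, admits an exponential dichotomy on `J`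
with respect to the family of (bounded) projections `P(n)`, `n ∈ J`:
there are constants `K, α > 0` such that
(i) `P(n)` are projections, `A(n) P(n) = P(n+1) A(n)` for `n ∈ J'`, and `A(n)` maps
`ker P(n)` bijectively onto `ker P(n+1)` for `n ∈ J'`;
(ii) `‖Φ(m,n) P(n)‖ ≤ K e^{-α (m-n)}` for `m ≥ n` in `J`;
(iii) `‖Φ(m,n) (Id - P(n))‖ ≤ K e^{-α (n-m)}` for `m ≤ n` in `J`, where
`Φ(m,n) : ker P(n) → ker P(m)` denotes the inverse of `Φ(n,m)` restricted to `ker P(m)`;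
the latter is phrased as: whenever `x ∈ ker P(m)` and `Φ(n,m) x = (Id - P(n)) y`,
then `‖x‖ ≤ K e^{-α (n-m)} ‖y‖`. -/
def IsExpDichotomy (J J' : Set ℤ) (A P : ℤ → X →L[ℝ] X) : Prop :=
  ∃ K α : ℝ, 0 < K ∧ 0 < α ∧
    (∀ n ∈ J, (P n).comp (P n) = P n) ∧
    (∀ n ∈ J', (A n).comp (P n) = (P (n + 1)).comp (A n)) ∧
    (∀ n ∈ J', Set.BijOn (A n) {x : X | P n x = 0} {x : X | P (n + 1) x = 0}) ∧
    (∀ m n : ℤ, m ∈ J → n ∈ J → n ≤ m →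
      ‖(Phi A m n).comp (P n)‖ ≤ K * Real.exp (-α * ((m : ℝ) - (n : ℝ)))) ∧
    (∀ m n : ℤ, m ∈ J → n ∈ J → m ≤ n → ∀ x y : X,
      P m x = 0 → Phi A n m x = y - P n y →
      ‖x‖ ≤ K * Real.exp (-α * ((n : ℝ) - (m : ℝ))) * ‖y‖)

/-- The system `x(n+1) = A(n) x(n)`, `n ∈ J'`, admits an exponential dichotomy on `J`. -/
def ExpDichotomy (J J' : Set ℤ) (A : ℤ → X →L[ℝ] X) : Prop :=
  ∃ P : ℤ → X →L[ℝ] X, IsExpDichotomy J J' A P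

/-- A subspace (given as a set) `S` of `X` is complemented: there is a closed subspace `Z`
of `X` with `X = S ⊕ Z`. -/
def IsComplementedSubspace (S : Set X) : Prop :=
  ∃ Z : Submodule ℝ X, IsClosed (Z : Set X) ∧
    (∀ v ∈ S, v ∈ Z → v = (0 : X)) ∧ ∀ v : X, ∃ s ∈ S, ∃ z ∈ Z, v = s + z

/-- The subspace `S = {v : sup_{n ∈ ℤ⁺} ‖Φ(n,0) v‖ < ∞}` of initial conditions of bounded
forward solutions. -/
def Sset (A : ℤ → X →L[ℝ] X) : Set X :=
  {v : X | ∃ C : ℝ, ∀ n : ℤ, 0 ≤ n → ‖Phi A n 0 v‖ ≤ C}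

/-- The subspace `U(m)` of all `v` for which there is a bounded sequence `(x(n))_{n ≤ m}`
with `x(m) = v` and `x(n) = A(n-1) x(n-1)` for `n ≤ m`. -/
def Uset (A : ℤ → X →L[ℝ] X) (m : ℤ) : Set X :=
  {v : X | ∃ x : ℤ → X, x m = v ∧ (∃ C : ℝ, ∀ n : ℤ, n ≤ m → ‖x n‖ ≤ C) ∧
    ∀ n : ℤ, n ≤ m → x n = A (n - 1) (x (n - 1))}

variable {X1 : Type u} {X2 : Type u} [NormedAddCommGroup X1] [NormedSpace ℝ X1]
  [NormedAddCommGroup X2] [NormedSpace ℝ X2]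

/-- The triangular system operator `(x1, x2) ↦ (A11(n) x1 + A12(n) x2, A22(n) x2)`. -/
def triangular (A11 : ℤ → X1 →L[ℝ] X1) (A12 : ℤ → X2 →L[ℝ] X1)
    (A22 : ℤ → X2 →L[ℝ] X2) (n : ℤ) : (X1 × X2) →L[ℝ] X1 × X2 :=
  (((A11 n).comp (fst ℝ X1 X2)) + ((A12 n).comp (snd ℝ X1 X2))).prod
    ((A22 n).comp (snd ℝ X1 X2))

/-- The diagonal system operator `(x1, x2) ↦ (A11(n) x1, A22(n) x2)`. -/
def diagonal (A11 : ℤ → X1 →L[ℝ] X1) (A22 : ℤ → X2 →L[ℝ] X2) (n : ℤ) :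
    (X1 × X2) →L[ℝ] X1 × X2 :=
  (A11 n).prodMap (A22 n)

namespace BTD

lemma Phi_self (A : ℤ → X →L[ℝ] X) (n : ℤ) (x : X) : Phi A n n x = x := by
  simp [Phi, cocycleAux]

lemma Phi_id (A : ℤ → X →L[ℝ] X) (n : ℤ) : Phi A n n = ContinuousLinearMap.id ℝ X := by
  simp [Phi, cocycleAux]

lemma Phi_succ (A : ℤ → X →L[ℝ] X) {m n : ℤ} (h : n ≤ m) (x : X) :
    Phi A (m + 1) n x = A m (Phi A m n x) := by
  have h1 : (m + 1 - n).toNat = (m - n).toNat + 1 := by omega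
  have h2 : n + ((m - n).toNat : ℤ) = m := by omega
  simp only [Phi, h1, cocycleAux, h2, ContinuousLinearMap.comp_apply]

lemma int_induction {k : ℤ} (Q : ℤ → Prop) (base : Q k)
    (step : ∀ m, k ≤ m → Q m → Q (m + 1)) : ∀ m, k ≤ m → Q m := by
  have H : ∀ j : ℕ, Q (k + j) := by
    intro j
    induction j with
    | zero => simpa using base
    | succ j ih =>
        have := step (k + j) (by omega) ih
        have e : k + (j + 1 : ℕ) = (k + j) + 1 := by push_cast; ring
        rwa [e]
  intro m hm
  have e : m = k + ((m - k).toNat : ℤ) := by omega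
  rw [e]; exact H _

lemma Phi_comp (A : ℤ → X →L[ℝ] X) {n k m : ℤ} (hnk : n ≤ k) (hkm : k ≤ m) (x : X) :
    Phi A m k (Phi A k n x) = Phi A m n x := by
  refine int_induction (fun m => Phi A m k (Phi A k n x) = Phi A m n x) ?_ ?_ m hkm
  · rw [Phi_self]
  · intro m hm ih
    rw [Phi_succ A hm, Phi_succ A (le_trans hnk hm), ih]

lemma Phi_step (A : ℤ → X →L[ℝ] X) (n : ℤ) (x : X) : Phi A (n + 1) n x = A n x := by
  rw [Phi_succ A le_rfl, Phi_self]

/-- Bundled exponential dichotomy data on `ℤ⁻`. -/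
structure Dicho (A P : ℤ → X →L[ℝ] X) (K α : ℝ) : Prop where
  hK : 1 ≤ K
  hα : 0 < α
  proj : ∀ n : ℤ, n ≤ 0 → (P n).comp (P n) = P n
  comm : ∀ n : ℤ, n ≤ -1 → (A n).comp (P n) = (P (n + 1)).comp (A n)
  bij : ∀ n : ℤ, n ≤ -1 → Set.BijOn (A n) {x : X | P n x = 0} {x : X | P (n + 1) x = 0}
  stab : ∀ m n : ℤ, m ≤ 0 → n ≤ 0 → n ≤ m →
      ‖(Phi A m n).comp (P n)‖ ≤ K * Real.exp (-α * ((m : ℝ) - (n : ℝ)))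
  unst : ∀ m n : ℤ, m ≤ 0 → n ≤ 0 → m ≤ n → ∀ x y : X,
      P m x = 0 → Phi A n m x = y - P n y →
      ‖x‖ ≤ K * Real.exp (-α * ((n : ℝ) - (m : ℝ))) * ‖y‖

namespace Dicho

variable {A P : ℤ → X →L[ℝ] X} {K α : ℝ} (h : Dicho A P K α)
include h

lemma proj_apply {n : ℤ} (hn : n ≤ 0) (x : X) : P n (P n x) = P n x := by
  have := h.proj n hn
  calc P n (P n x) = ((P n).comp (P n)) x := rfl
    _ = P n x := by rw [this]

lemma comm_apply {n m : ℤ} (hnm : n ≤ m) (hm : m ≤ 0) (x : X) :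
    Phi A m n (P n x) = P m (Phi A m n x) := by
  refine int_induction
    (fun m => m ≤ 0 → Phi A m n (P n x) = P m (Phi A m n x)) ?_ ?_ m hnm hm
  · intro _; rw [Phi_self, Phi_self]
  · intro m hm ih hm1
    have hm0 : m ≤ 0 := by omega
    have hc := h.comm m (by omega)
    rw [Phi_succ A hm, Phi_succ A hm, ih hm0]
    calc A m (P m (Phi A m n x)) = ((A m).comp (P m)) (Phi A m n x) := rfl
      _ = ((P (m + 1)).comp (A m)) (Phi A m n x) := by rw [hc]
      _ = P (m + 1) (A m (Phi A m n x)) := rfl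

lemma ker_invariant {n m : ℤ} (hnm : n ≤ m) (hm : m ≤ 0) {x : X} (hx : P n x = 0) :
    P m (Phi A m n x) = 0 := by
  rw [← h.comm_apply hnm hm, hx, map_zero]

lemma injOn_ker {n m : ℤ} (hnm : n ≤ m) (hm : m ≤ 0) {x y : X}
    (hx : P n x = 0) (hy : P n y = 0) (hxy : Phi A m n x = Phi A m n y) : x = y := by
  refine int_induction
    (fun m => m ≤ 0 → Phi A m n x = Phi A m n y → x = y) ?_ ?_ m hnm hm hxy
  · intro _ hh; rw [Phi_self, Phi_self] at hh; exact hh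
  · intro m hm ih hm1 hh
    have hm0 : m ≤ 0 := by omega
    refine ih hm0 ?_
    rw [Phi_succ A hm, Phi_succ A hm] at hh
    exact (h.bij m (by omega)).injOn (h.ker_invariant hm hm0 hx)
      (h.ker_invariant hm hm0 hy) hh

lemma surjOn_ker {n m : ℤ} (hnm : n ≤ m) (hm : m ≤ 0) {y : X} (hy : P m y = 0) :
    ∃ x : X, P n x = 0 ∧ Phi A m n x = y := by
  refine int_induction
    (fun m => m ≤ 0 → ∀ y : X, P m y = 0 → ∃ x : X, P n x = 0 ∧ Phi A m n x = y)
    ?_ ?_ m hnm hm y hy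
  · intro _ y hy; exact ⟨y, hy, Phi_self A n y⟩
  · intro m hm ih hm1 y hy
    have hm0 : m ≤ 0 := by omega
    obtain ⟨z, hz1, hz2⟩ := (h.bij m (by omega)).surjOn hy
    obtain ⟨x, hx1, hx2⟩ := ih hm0 z hz1
    exact ⟨x, hx1, by rw [Phi_succ A hm, hx2, hz2]⟩

lemma norm_P_le {n : ℤ} (hn : n ≤ 0) : ‖P n‖ ≤ K := by
  have := h.stab n n hn hn le_rfl
  rw [Phi_id] at this
  simpa using this

lemma stab_apply {m n : ℤ} (hm : m ≤ 0) (hn : n ≤ 0) (hnm : n ≤ m) (x : X) :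
    ‖Phi A m n (P n x)‖ ≤ K * Real.exp (-α * ((m : ℝ) - (n : ℝ))) * ‖x‖ := by
  have h1 : ‖((Phi A m n).comp (P n)) x‖ ≤ ‖(Phi A m n).comp (P n)‖ * ‖x‖ :=
    ContinuousLinearMap.le_opNorm _ _
  calc ‖Phi A m n (P n x)‖ = ‖((Phi A m n).comp (P n)) x‖ := rfl
    _ ≤ ‖(Phi A m n).comp (P n)‖ * ‖x‖ := h1
    _ ≤ K * Real.exp (-α * ((m : ℝ) - (n : ℝ))) * ‖x‖ :=
        mul_le_mul_of_nonneg_right (h.stab m n hm hn hnm) (norm_nonneg x)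

/-- Backward estimate along the unstable bundle. -/
lemma unst_apply {m n : ℤ} (hm : m ≤ 0) (hnm : m ≤ n) (hn : n ≤ 0) {x : X}
    (hx : P m x = 0) :
    ‖x‖ ≤ K * Real.exp (-α * ((n : ℝ) - (m : ℝ))) * ‖Phi A n m x‖ := by
  refine h.unst m n hm hn hnm x (Phi A n m x) hx ?_
  rw [h.ker_invariant hnm hn hx, sub_zero]

end Dicho

section UsetLemmas
variable {A : ℤ → X →L[ℝ] X} {m n : ℤ}

lemma sol_phi {x : ℤ → X} (hsol : ∀ n : ℤ, n ≤ m → x n = A (n - 1) (x (n - 1)))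
    {k j : ℤ} (hk : k ≤ j) (hj : j ≤ m) : Phi A j k (x k) = x j := by
  refine int_induction (fun j => j ≤ m → Phi A j k (x k) = x j) ?_ ?_ j hk hj
  · intro _; rw [Phi_self]
  · intro j hkj ih hj1
    rw [Phi_succ A hkj, ih (by omega)]
    have e : (j : ℤ) + 1 - 1 = j := by ring
    have := hsol (j + 1) hj1
    rw [e] at this
    exact this.symm

lemma Uset.zero_mem (A : ℤ → X →L[ℝ] X) (m : ℤ) : (0 : X) ∈ Uset A m :=
  ⟨fun _ => 0, rfl, ⟨0, fun n _ => by simp⟩, fun n _ => by simp⟩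

lemma Uset.add_mem {v w : X} (hv : v ∈ Uset A m) (hw : w ∈ Uset A m) :
    v + w ∈ Uset A m := by
  obtain ⟨x, hxm, ⟨C, hC⟩, hsol⟩ := hv
  obtain ⟨y, hym, ⟨D, hD⟩, hsoly⟩ := hw
  refine ⟨fun k => x k + y k, by dsimp only; rw [hxm, hym], ⟨C + D, fun k hk => ?_⟩, fun k hk => ?_⟩
  all_goals dsimp only
  · exact (norm_add_le _ _).trans (add_le_add (hC k hk) (hD k hk))
  · rw [hsol k hk, hsoly k hk, map_add]

lemma Uset.smul_mem (c : ℝ) {v : X} (hv : v ∈ Uset A m) : c • v ∈ Uset A m := by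
  obtain ⟨x, hxm, ⟨C, hC⟩, hsol⟩ := hv
  refine ⟨fun k => c • x k, by dsimp only; rw [hxm], ⟨|c| * C, fun k hk => ?_⟩, fun k hk => ?_⟩
  all_goals dsimp only
  · rw [norm_smul, Real.norm_eq_abs]
    exact mul_le_mul_of_nonneg_left (hC k hk) (abs_nonneg c)
  · rw [hsol k hk, map_smul]

/-- `Uset` as a submodule. -/
def U1 (A : ℤ → X →L[ℝ] X) (m : ℤ) : Submodule ℝ X where
  carrier := Uset A m
  zero_mem' := Uset.zero_mem A m
  add_mem' := Uset.add_mem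
  smul_mem' := Uset.smul_mem

lemma U1_coe (A : ℤ → X →L[ℝ] X) (m : ℤ) : (U1 A m : Set X) = Uset A m := rfl

lemma span_Uset (A : ℤ → X →L[ℝ] X) (m : ℤ) :
    Submodule.span ℝ (Uset A m) = U1 A m := Submodule.span_eq (U1 A m)

/-- Backward restriction together with the transport identity. -/
lemma Uset.exists_past {v : X} (hv : v ∈ Uset A m) (hk : n ≤ m) :
    ∃ u ∈ Uset A n, Phi A m n u = v := by
  obtain ⟨x, hxm, ⟨C, hC⟩, hsol⟩ := hv
  refine ⟨x n, ⟨x, rfl, ⟨C, fun j hj => hC j (hj.trans hk)⟩,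
    fun j hj => hsol j (hj.trans hk)⟩, ?_⟩
  rw [sol_phi hsol hk le_rfl, hxm]

/-- Forward invariance of `Uset` under the cocycle. -/
lemma Uset.phi_mem {v : X} (hv : v ∈ Uset A m) (hmn : m ≤ n) :
    Phi A n m v ∈ Uset A n := by
  obtain ⟨x, hxm, ⟨C, hC⟩, hsol⟩ := hv
  obtain ⟨b, hb⟩ := (((Set.finite_Icc (m + 1) n).image
    fun k => ‖Phi A k m v‖)).bddAbove
  refine ⟨fun k => if k ≤ m then x k else Phi A k m v, by
      by_cases hc : n ≤ m
      · have : n = m := le_antisymm hc hmn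
        simp only [this, if_pos (le_refl m), hxm]
        exact (Phi_self A m v).symm
      · simp only [if_neg hc]
    , ⟨max C b, fun k hk => ?_⟩, fun k hk => ?_⟩
  · by_cases hc : k ≤ m
    · simp only [if_pos hc]
      exact (hC k hc).trans (le_max_left _ _)
    · simp only [if_neg hc]
      refine le_trans (hb ⟨k, Set.mem_Icc.2 ⟨by omega, hk⟩, rfl⟩) (le_max_right _ _)
  · by_cases hc : k ≤ m
    · simp only [if_pos hc, if_pos (by omega : k - 1 ≤ m)]
      exact hsol k hc
    · simp only [if_neg hc]
      by_cases hc1 : k - 1 ≤ m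
      · have hkm : k = m + 1 := by omega
        simp only [if_pos hc1]
        subst hkm
        rw [Phi_step]
        have e : (m : ℤ) + 1 - 1 = m := by ring
        rw [e, hxm]
      · simp only [if_neg hc1]
        have e : k = (k - 1) + 1 := by ring
        rw [e, Phi_succ A (by omega : m ≤ k - 1)]
        have e2 : k - 1 + 1 - 1 = k - 1 := by ring
        rw [e2]

lemma Uset.step_mem {v : X} (hv : v ∈ Uset A m) : A m v ∈ Uset A (m + 1) := by
  have := Uset.phi_mem hv (by omega : m ≤ m + 1)
  rwa [Phi_step] at this

end UsetLemmas
section Tri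
set_option linter.unusedSectionVars false

variable {H1 : Type u} {H2 : Type u}
  [NormedAddCommGroup H1] [NormedSpace ℝ H1]
  [NormedAddCommGroup H2] [NormedSpace ℝ H2]
  {A11 : ℤ → H1 →L[ℝ] H1} {A12 : ℤ → H2 →L[ℝ] H1} {A22 : ℤ → H2 →L[ℝ] H2}
  {P : ℤ → (H1 × H2) →L[ℝ] H1 × H2} {K α : ℝ}

lemma norm_pair (v : H1) : ‖((v, 0) : H1 × H2)‖ = ‖v‖ := by
  rw [Prod.norm_def]
  simp [max_eq_left (norm_nonneg v)]

lemma norm_fst_le (z : H1 × H2) : ‖z.1‖ ≤ ‖z‖ := by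
  rw [Prod.norm_def]; exact le_max_left _ _

lemma norm_snd_le (z : H1 × H2) : ‖z.2‖ ≤ ‖z‖ := by
  rw [Prod.norm_def]; exact le_max_right _ _

lemma tri_apply_pair (n : ℤ) (v : H1) :
    triangular A11 A12 A22 n (v, 0) = (A11 n v, 0) := by
  simp [triangular, ContinuousLinearMap.prod_apply]

lemma tri_phi_pair {n m : ℤ} (hnm : n ≤ m) (v : H1) :
    Phi (triangular A11 A12 A22) m n (v, 0) = (Phi A11 m n v, 0) := by
  refine int_induction
    (fun m => Phi (triangular A11 A12 A22) m n (v, 0) = (Phi A11 m n v, 0)) ?_ ?_ m hnm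
  · rw [Phi_self, Phi_self]
  · intro m hm ih
    rw [Phi_succ _ hm, Phi_succ A11 hm, ih, tri_apply_pair]

namespace Dicho
variable (h : Dicho (triangular A11 A12 A22) P K α)
include h

/-- Initial values of bounded backward solutions of the `A11`-system lie in the kernels. -/
lemma mem_ker_of_Uset {n : ℤ} (hn : n ≤ 0) {v : H1} (hv : v ∈ Uset A11 n) :
    P n (v, 0) = 0 := by
  obtain ⟨x, hxm, ⟨C, hC⟩, hsol⟩ := hv
  have hC0 : 0 ≤ C := le_trans (norm_nonneg _) (hC n le_rfl)
  have key : ∀ j : ℕ, ‖P n (v, 0)‖ ≤ K * Real.exp (-α) ^ j * C := by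
    intro j
    have hk : n - (j : ℤ) ≤ n := by omega
    have h1 : Phi A11 n (n - (j : ℤ)) (x (n - (j : ℤ))) = v := by
      rw [sol_phi hsol hk le_rfl, hxm]
    have h2 : Phi (triangular A11 A12 A22) n (n - (j : ℤ)) ((x (n - (j : ℤ)), 0)) = (v, 0) := by
      rw [tri_phi_pair hk, h1]
    have h3 : P n (v, 0) =
        Phi (triangular A11 A12 A22) n (n - (j : ℤ)) (P (n - (j : ℤ)) (x (n - (j : ℤ)), 0)) := by
      rw [h.comm_apply hk hn, h2]
    rw [h3]
    have h4 := h.stab_apply hn (by omega : n - (j : ℤ) ≤ 0) hk ((x (n - (j : ℤ)), 0))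
    have e : -α * ((n : ℝ) - ((n - (j : ℤ) : ℤ) : ℝ)) = (j : ℕ) * (-α) := by
      push_cast; ring
    rw [e, Real.exp_nat_mul] at h4
    refine h4.trans ?_
    have : ‖((x (n - (j : ℤ)), 0) : H1 × H2)‖ ≤ C := by
      rw [norm_pair]; exact hC _ hk
    have hKe : 0 ≤ K * Real.exp (-α) ^ j :=
      mul_nonneg (by linarith [h.hK]) (pow_nonneg (Real.exp_pos _).le _)
    exact mul_le_mul_of_nonneg_left this hKe
  have hlim : Filter.Tendsto (fun j : ℕ => K * Real.exp (-α) ^ j * C) Filter.atTop (nhds 0) := by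
    have hexp : Real.exp (-α) < 1 := Real.exp_lt_one_iff.mpr (by linarith [h.hα])
    have := tendsto_pow_atTop_nhds_zero_of_lt_one (Real.exp_pos _).le hexp
    have := (this.const_mul K).mul_const C
    simpa using this
  have : ‖P n (v, 0)‖ ≤ 0 := ge_of_tendsto' hlim key
  simpa using norm_le_zero_iff.mp this

lemma U1_phi_inj {m n : ℤ} (hmn : m ≤ n) (hn : n ≤ 0) {v : H1}
    (hv : v ∈ Uset A11 m) (hz : Phi A11 n m v = 0) : v = 0 := by
  have h1 : P m (v, 0) = 0 := h.mem_ker_of_Uset (hmn.trans hn) hv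
  have h2 : Phi (triangular A11 A12 A22) n m (v, 0) = 0 := by
    rw [tri_phi_pair hmn, hz]; rfl
  have h3 : Phi (triangular A11 A12 A22) n m ((0 : H1 × H2)) = 0 := map_zero _
  have := h.injOn_ker hmn hn h1 (map_zero (P m)) (h2.trans h3.symm)
  exact congrArg Prod.fst this

end Dicho

open scoped Classical in
/-- Backward transport on the unstable bundle, via choice. -/
noncomputable def tau (A11 : ℤ → H1 →L[ℝ] H1) (A12 : ℤ → H2 →L[ℝ] H1)
    (A22 : ℤ → H2 →L[ℝ] H2) (P : ℤ → (H1 × H2) →L[ℝ] H1 × H2)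
    (k : ℤ) (c : H1 × H2) : H1 × H2 :=
  if H : ∃ x, P k x = 0 ∧ Phi (triangular A11 A12 A22) 0 k x = c then H.choose else 0

namespace Dicho
variable (h : Dicho (triangular A11 A12 A22) P K α)
include h

open scoped Classical in
lemma tau_spec {k : ℤ} (hk : k ≤ 0) {c : H1 × H2} (hc : P 0 c = 0) :
    P k (tau A11 A12 A22 P k c) = 0 ∧
      Phi (triangular A11 A12 A22) 0 k (tau A11 A12 A22 P k c) = c := by
  have H : ∃ x, P k x = 0 ∧ Phi (triangular A11 A12 A22) 0 k x = c :=
    h.surjOn_ker hk le_rfl hc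
  rw [tau, dif_pos H]
  exact H.choose_spec

lemma tau_unique {k : ℤ} (hk : k ≤ 0) {c x : H1 × H2} (hc : P 0 c = 0)
    (hx : P k x = 0) (hphi : Phi (triangular A11 A12 A22) 0 k x = c) :
    x = tau A11 A12 A22 P k c := by
  obtain ⟨hs1, hs2⟩ := h.tau_spec hk hc
  exact h.injOn_ker hk le_rfl hx hs1 (hphi.trans hs2.symm)

lemma tau_sub {k : ℤ} (hk : k ≤ 0) {c c' : H1 × H2} (hc : P 0 c = 0) (hc' : P 0 c' = 0) :
    tau A11 A12 A22 P k c - tau A11 A12 A22 P k c' = tau A11 A12 A22 P k (c - c') := by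
  obtain ⟨h1, h2⟩ := h.tau_spec hk hc
  obtain ⟨h1', h2'⟩ := h.tau_spec hk hc'
  refine h.tau_unique hk (by rw [map_sub, hc, hc', sub_zero]) ?_ ?_
  · rw [map_sub, h1, h1', sub_zero]
  · rw [map_sub, h2, h2']

lemma tau_norm {k : ℤ} (hk : k ≤ 0) {c : H1 × H2} (hc : P 0 c = 0) :
    ‖tau A11 A12 A22 P k c‖ ≤ K * Real.exp (α * (k : ℝ)) * ‖c‖ := by
  obtain ⟨h1, h2⟩ := h.tau_spec hk hc
  have := h.unst k 0 hk le_rfl hk (tau A11 A12 A22 P k c) c h1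
    (by rw [h2, hc, sub_zero])
  have e : -α * ((((0:ℤ)) : ℝ) - (k : ℝ)) = α * (k : ℝ) := by push_cast; ring
  rwa [e] at this

lemma tau_self {c : H1 × H2} (hc : P 0 c = 0) : tau A11 A12 A22 P 0 c = c :=
  (h.tau_unique le_rfl hc hc (Phi_self _ 0 c)).symm

lemma tau_step {k : ℤ} (hk : k ≤ 0) {c : H1 × H2} (hc : P 0 c = 0) :
    triangular A11 A12 A22 (k - 1) (tau A11 A12 A22 P (k - 1) c) = tau A11 A12 A22 P k c := by
  obtain ⟨h1, h2⟩ := h.tau_spec (by omega : k - 1 ≤ 0) hc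
  have e : k - 1 + 1 = k := by ring
  refine h.tau_unique hk hc ?_ ?_
  · have := (h.bij (k - 1) (by omega)).mapsTo h1
    rwa [e] at this
  · have hstep : Phi (triangular A11 A12 A22) (k - 1 + 1) (k - 1) (tau A11 A12 A22 P (k - 1) c)
        = triangular A11 A12 A22 (k - 1) (tau A11 A12 A22 P (k - 1) c) := Phi_step _ _ _
    rw [e] at hstep
    rw [← hstep, Phi_comp _ (by omega : k - 1 ≤ k) hk, h2]

lemma mem_Uset_of_tau_snd {c : H1 × H2} (hc : P 0 c = 0)
    (hz : ∀ k : ℤ, k ≤ 0 → (tau A11 A12 A22 P k c).2 = 0) : c.1 ∈ Uset A11 0 := by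
  refine ⟨fun k => (tau A11 A12 A22 P k c).1, ?_, ⟨K * ‖c‖, fun k hk => ?_⟩, fun k hk => ?_⟩
  · dsimp only; rw [h.tau_self hc]
  · dsimp only
    have h1 := h.tau_norm hk hc
    have h2 : Real.exp (α * (k : ℝ)) ≤ 1 := by
      rw [Real.exp_le_one_iff]
      have : (k : ℝ) ≤ 0 := by exact_mod_cast hk
      nlinarith [h.hα]
    calc ‖(tau A11 A12 A22 P k c).1‖ ≤ ‖tau A11 A12 A22 P k c‖ := norm_fst_le _
      _ ≤ K * Real.exp (α * (k : ℝ)) * ‖c‖ := h1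
      _ ≤ K * 1 * ‖c‖ := by
          have hKpos : (0:ℝ) ≤ K := by linarith [h.hK]
          have := mul_le_mul_of_nonneg_left h2 hKpos
          exact mul_le_mul_of_nonneg_right this (norm_nonneg c)
      _ = K * ‖c‖ := by ring
  · dsimp only
    have hstep := h.tau_step hk hc
    have : (triangular A11 A12 A22 (k - 1) (tau A11 A12 A22 P (k - 1) c)).1
        = A11 (k - 1) ((tau A11 A12 A22 P (k - 1) c).1) := by
      have hsnd := hz (k - 1) (by omega)
      simp [triangular, hsnd]
    rw [← hstep, this]

end Dicho
end Tri

section Hilbert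
set_option linter.unusedSectionVars false

variable {H1 : Type u} {H2 : Type u}
  [NormedAddCommGroup H1] [InnerProductSpace ℝ H1] [CompleteSpace H1]
  [NormedAddCommGroup H2] [InnerProductSpace ℝ H2] [CompleteSpace H2]
  {A11 : ℤ → H1 →L[ℝ] H1} {A12 : ℤ → H2 →L[ℝ] H1} {A22 : ℤ → H2 →L[ℝ] H2}
  {P : ℤ → (H1 × H2) →L[ℝ] H1 × H2} {K α : ℝ}

namespace Dicho
variable (h : Dicho (triangular A11 A12 A22) P K α)
include h

/-- The natural injection of `U1 A11 n` into `ker (P 0)`. -/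
noncomputable def U1toKer (n : ℤ) (hn : n ≤ 0) :
    ↥(U1 A11 n) →ₗ[ℝ] ↥(LinearMap.ker (P 0 : (H1 × H2) →ₗ[ℝ] H1 × H2)) :=
  LinearMap.codRestrict (LinearMap.ker (P 0 : (H1 × H2) →ₗ[ℝ] H1 × H2))
    (((Phi (triangular A11 A12 A22) 0 n).toLinearMap).comp
      ((LinearMap.inl ℝ H1 H2).comp (U1 A11 n).subtype))
    (fun v => by
      have h1 : P n ((v : H1), (0 : H2)) = 0 := h.mem_ker_of_Uset hn v.2
      have h2 := h.ker_invariant hn le_rfl h1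
      simpa using h2)

lemma U1toKer_injective (n : ℤ) (hn : n ≤ 0) : Function.Injective (h.U1toKer n hn) := by
  intro v w hvw
  have h1 : Phi (triangular A11 A12 A22) 0 n ((v : H1), (0 : H2))
      = Phi (triangular A11 A12 A22) 0 n ((w : H1), (0 : H2)) := by
    have := congrArg (Subtype.val) hvw
    simpa [U1toKer] using this
  have hv : P n ((v : H1), (0 : H2)) = 0 := h.mem_ker_of_Uset hn v.2
  have hw : P n ((w : H1), (0 : H2)) = 0 := h.mem_ker_of_Uset hn w.2
  have := h.injOn_ker hn le_rfl hv hw h1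
  exact Subtype.ext (congrArg Prod.fst this)

lemma findim_U1 (n : ℤ) (hn : n ≤ 0) [FiniteDimensional ℝ ↥(LinearMap.ker (P 0 : (H1 × H2) →ₗ[ℝ] H1 × H2))] :
    FiniteDimensional ℝ ↥(U1 A11 n) :=
  Module.Finite.of_injective (h.U1toKer n hn) (h.U1toKer_injective n hn)

lemma rank_U1_le (n : ℤ) (hn : n ≤ 0) :
    Module.rank ℝ ↥(U1 A11 n) ≤ Module.rank ℝ ↥(LinearMap.ker (P 0 : (H1 × H2) →ₗ[ℝ] H1 × H2)) :=
  LinearMap.rank_le_of_injective _ (h.U1toKer_injective n hn)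

lemma u_mem_ker {n : ℤ} (hn : n ≤ 0) (v : H1) :
    P n (((v, 0) : H1 × H2) - P n (v, 0)) = 0 := by
  rw [map_sub, h.proj_apply hn, sub_self]

lemma phi_stab_pair {n k : ℤ} (hnk : n ≤ k) (hk : k ≤ 0) (v : H1) :
    ‖Phi (triangular A11 A12 A22) k n (P n ((v, 0) : H1 × H2))‖
      ≤ K * Real.exp (-α * ((k : ℝ) - (n : ℝ))) * ‖v‖ := by
  have := h.stab_apply hk (hnk.trans hk) hnk (((v, 0) : H1 × H2))
  rwa [norm_pair] at this

lemma phi_u_eq {n k : ℤ} (hnk : n ≤ k) (v : H1) :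
    Phi (triangular A11 A12 A22) k n (((v, 0) : H1 × H2) - P n (v, 0))
      = (Phi A11 k n v, 0) - Phi (triangular A11 A12 A22) k n (P n (v, 0)) := by
  rw [map_sub, tri_phi_pair hnk]

lemma snd_phi_u_bound {n k : ℤ} (hnk : n ≤ k) (hk : k ≤ 0) (v : H1) :
    ‖(Phi (triangular A11 A12 A22) k n (((v, 0) : H1 × H2) - P n (v, 0))).2‖
      ≤ K * Real.exp (-α * ((k : ℝ) - (n : ℝ))) * ‖v‖ := by
  rw [h.phi_u_eq hnk]
  have : ((Phi A11 k n v, (0:H2)) - Phi (triangular A11 A12 A22) k n (P n (v, 0))).2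
      = -(Phi (triangular A11 A12 A22) k n (P n ((v, 0) : H1 × H2))).2 := by
    simp
  rw [this, norm_neg]
  exact le_trans (norm_snd_le _) (h.phi_stab_pair hnk hk v)

lemma fst_phi_u_bound {n k : ℤ} (hnk : n ≤ k) (hk : k ≤ 0) (v : H1) :
    ‖(Phi (triangular A11 A12 A22) k n (((v, 0) : H1 × H2) - P n (v, 0))).1
       - Phi A11 k n v‖
      ≤ K * Real.exp (-α * ((k : ℝ) - (n : ℝ))) * ‖v‖ := by
  rw [h.phi_u_eq hnk]
  have : ((Phi A11 k n v, (0:H2)) - Phi (triangular A11 A12 A22) k n (P n (v, 0))).1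
       - Phi A11 k n v
      = -(Phi (triangular A11 A12 A22) k n (P n ((v, 0) : H1 × H2))).1 := by
    simp
  rw [this, norm_neg]
  exact le_trans (norm_fst_le _) (h.phi_stab_pair hnk hk v)

lemma window_bound {n : ℤ} (hn : n ≤ 0) (v : H1) :
    ‖Phi (triangular A11 A12 A22) 0 n (((v, 0) : H1 × H2) - P n (v, 0))‖
      ≤ ‖Phi (triangular A11 A12 A22) 0 n‖ * (1 + K) * ‖v‖ := by
  have h1 : ‖((v, 0) : H1 × H2) - P n (v, 0)‖ ≤ (1 + K) * ‖v‖ := by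
    have h2 : ‖P n ((v, 0) : H1 × H2)‖ ≤ K * ‖v‖ := by
      have := (P n).le_opNorm (((v, 0)) : H1 × H2)
      rw [norm_pair] at this
      exact this.trans (mul_le_mul_of_nonneg_right (h.norm_P_le hn) (norm_nonneg v))
    calc ‖((v, 0) : H1 × H2) - P n (v, 0)‖
        ≤ ‖((v, 0) : H1 × H2)‖ + ‖P n ((v, 0) : H1 × H2)‖ := norm_sub_le _ _
      _ ≤ ‖v‖ + K * ‖v‖ := by rw [norm_pair]; exact add_le_add_right h2 _
      _ = (1 + K) * ‖v‖ := by ring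
  calc ‖Phi (triangular A11 A12 A22) 0 n (((v, 0) : H1 × H2) - P n (v, 0))‖
      ≤ ‖Phi (triangular A11 A12 A22) 0 n‖ * ((1 + K) * ‖v‖) :=
        le_trans ((Phi (triangular A11 A12 A22) 0 n).le_opNorm _)
          (mul_le_mul_of_nonneg_left h1 (norm_nonneg _))
    _ = ‖Phi (triangular A11 A12 A22) 0 n‖ * (1 + K) * ‖v‖ := by ring

lemma tau_of_scaled_phi {n k : ℤ} (hnk : n ≤ k) (hk : k ≤ 0) (a : ℝ) {u : H1 × H2}
    (hu : P n u = 0) :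
    tau A11 A12 A22 P k (a • Phi (triangular A11 A12 A22) 0 n u)
      = a • Phi (triangular A11 A12 A22) k n u := by
  have hn : n ≤ 0 := hnk.trans hk
  refine (h.tau_unique hk ?_ ?_ ?_).symm
  · rw [map_smul, h.ker_invariant hn le_rfl hu, smul_zero]
  · rw [map_smul, h.ker_invariant hnk hk hu, smul_zero]
  · rw [map_smul, Phi_comp _ hnk hk]

set_option maxHeartbeats 2000000 in
/-- The key estimate: unstable components of vectors whose forward image at time `0`
lies in `(U1 A11 0)ᗮ` are exponentially small. -/
lemma main_estimate [FiniteDimensional ℝ ↥(LinearMap.ker (P 0 : (H1 × H2) →ₗ[ℝ] H1 × H2))] :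
    ∃ C : ℝ, 1 ≤ C ∧ ∀ n : ℤ, n ≤ 0 → ∀ v : H1,
      Phi A11 0 n v ∈ (U1 A11 0)ᗮ →
      ‖Phi (triangular A11 A12 A22) 0 n (((v, 0) : H1 × H2) - P n (v, 0))‖
        ≤ C * Real.exp (α * (n : ℝ)) * ‖v‖ := by
  classical
  have hK0 : (0:ℝ) < K := lt_of_lt_of_le one_pos h.hK
  -- trivial case: `ker (P 0)` is trivial
  rcases subsingleton_or_nontrivial ↥(LinearMap.ker (P 0 : (H1 × H2) →ₗ[ℝ] H1 × H2)) with hss | hnt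
  · refine ⟨1, le_rfl, fun n hn v _ => ?_⟩
    have hu := h.u_mem_ker hn v
    have hmem : Phi (triangular A11 A12 A22) 0 n (((v, 0) : H1 × H2) - P n (v, 0))
        ∈ LinearMap.ker (P 0 : (H1 × H2) →ₗ[ℝ] H1 × H2) := by
      rw [LinearMap.mem_ker]
      exact h.ker_invariant hn le_rfl hu
    have : (⟨_, hmem⟩ : ↥(LinearMap.ker (P 0 : (H1 × H2) →ₗ[ℝ] H1 × H2))) = 0 := Subsingleton.elim _ _
    have hz : Phi (triangular A11 A12 A22) 0 n (((v, 0) : H1 × H2) - P n (v, 0)) = 0 := by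
      simpa using congrArg Subtype.val this
    rw [hz, norm_zero]
    positivity
  -- the function `F` on `ker (P 0)`
  set g : ℕ → ↥(LinearMap.ker (P 0 : (H1 × H2) →ₗ[ℝ] H1 × H2)) → ℝ := fun j c =>
    ((2:ℝ)⁻¹) ^ j * min ‖(tau A11 A12 A22 P (-(j:ℤ)) (c : H1 × H2)).2‖ 1 with hg
  have hg_nonneg : ∀ j c, 0 ≤ g j c := fun j c =>
    mul_nonneg (by positivity) (le_min (norm_nonneg _) one_pos.le)
  have hg_le : ∀ j c, g j c ≤ ((2:ℝ)⁻¹) ^ j := fun j c => by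
    have : min ‖(tau A11 A12 A22 P (-(j:ℤ)) (c : H1 × H2)).2‖ 1 ≤ 1 := min_le_right _ _
    calc g j c ≤ ((2:ℝ)⁻¹) ^ j * 1 := mul_le_mul_of_nonneg_left this (by positivity)
      _ = ((2:ℝ)⁻¹) ^ j := mul_one _
  have hgeom_sum : Summable (fun j : ℕ => ((2:ℝ)⁻¹) ^ j) :=
    summable_geometric_of_lt_one (by norm_num) (by norm_num)
  have hgeom_val : ∑' j : ℕ, ((2:ℝ)⁻¹) ^ j = 2 := by
    rw [tsum_geometric_of_lt_one (by norm_num) (by norm_num)]; norm_num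
  have hsummable : ∀ c, Summable (fun j => g j c) := fun c =>
    Summable.of_nonneg_of_le (fun j => hg_nonneg j c) (fun j => hg_le j c) hgeom_sum
  set F : ↥(LinearMap.ker (P 0 : (H1 × H2) →ₗ[ℝ] H1 × H2)) → ℝ := fun c =>
    Metric.infDist (c : H1 × H2).1 (((U1 A11 0)ᗮ : Submodule ℝ H1) : Set H1)
      + ‖(c : H1 × H2).2‖ + ∑' j : ℕ, g j c with hF
  -- continuity of F
  have htau_cont : ∀ j : ℕ, Continuous
      (fun c : ↥(LinearMap.ker (P 0 : (H1 × H2) →ₗ[ℝ] H1 × H2)) => tau A11 A12 A22 P (-(j:ℤ)) (c : H1 × H2)) := by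
    intro j
    have hk : (-(j:ℤ)) ≤ 0 := by omega
    refine (LipschitzWith.of_dist_le_mul
      (K := Real.toNNReal (K * Real.exp (α * ((-(j:ℤ)) : ℝ)))) ?_).continuous
    intro c c'
    rw [dist_eq_norm, dist_eq_norm]
    have hc : P 0 (c : H1 × H2) = 0 := c.2
    have hc' : P 0 (c' : H1 × H2) = 0 := c'.2
    rw [h.tau_sub hk hc hc']
    have hsub : P 0 ((c : H1 × H2) - (c' : H1 × H2)) = 0 := by
      rw [map_sub, hc, hc', sub_zero]
    have := h.tau_norm hk hsub
    refine this.trans ?_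
    have h1 : K * Real.exp (α * ((-(j:ℤ)) : ℝ))
        ≤ ((K * Real.exp (α * ((-(j:ℤ)) : ℝ))).toNNReal : ℝ) := Real.le_coe_toNNReal _
    have h2 : ‖c - c'‖ = ‖(c : H1 × H2) - (c' : H1 × H2)‖ := rfl
    rw [h2]
    push_cast
    exact mul_le_mul_of_nonneg_right h1 (norm_nonneg _)
  have hFcont : Continuous F := by
    refine (Continuous.add ?_ ?_).add ?_
    · exact (Metric.continuous_infDist_pt _).comp (continuous_fst.comp continuous_subtype_val)
    · exact (continuous_snd.comp continuous_subtype_val).norm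
    · refine continuous_tsum (fun j => ?_) hgeom_sum (fun j c => ?_)
      · exact continuous_const.mul
          (((continuous_snd.comp (htau_cont j))).norm.min continuous_const)
      · rw [Real.norm_eq_abs, abs_of_nonneg (hg_nonneg j c)]
        exact hg_le j c
  -- positivity of F on the unit sphere
  have hFpos : ∀ c : ↥(LinearMap.ker (P 0 : (H1 × H2) →ₗ[ℝ] H1 × H2)), ‖c‖ = 1 → 0 < F c := by
    intro c hc1
    have hd0 : (0:ℝ) ≤ Metric.infDist (c : H1 × H2).1
        (((U1 A11 0)ᗮ : Submodule ℝ H1) : Set H1) := Metric.infDist_nonneg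
    have hn0 : (0:ℝ) ≤ ‖(c : H1 × H2).2‖ := norm_nonneg _
    have ht0 : (0:ℝ) ≤ ∑' j : ℕ, g j c := tsum_nonneg (fun j => hg_nonneg j c)
    have hF0 : 0 ≤ F c := add_nonneg (add_nonneg hd0 hn0) ht0
    rcases hF0.lt_or_eq with hlt | heq
    · exact hlt
    exfalso
    have hFc : F c = 0 := heq.symm
    rw [hF] at hFc; dsimp only at hFc
    have hd : Metric.infDist (c : H1 × H2).1
        (((U1 A11 0)ᗮ : Submodule ℝ H1) : Set H1) = 0 := by linarith
    have hn : ‖(c : H1 × H2).2‖ = 0 := by linarith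
    have ht : ∑' j : ℕ, g j c = 0 := by linarith
    have hgz : ∀ j, g j c = 0 := by
      intro j
      have hle : g j c ≤ ∑' j : ℕ, g j c :=
        Summable.le_tsum (hsummable c) j (fun j' _ => hg_nonneg j' c)
      have := hg_nonneg j c
      linarith [hle.trans_eq ht]
    have hz : ∀ k : ℤ, k ≤ 0 → (tau A11 A12 A22 P k (c : H1 × H2)).2 = 0 := by
      intro k hk
      have e : -(((-k).toNat : ℕ) : ℤ) = k := by omega
      have := hgz (-k).toNat
      rw [hg] at this; dsimp only at this
      rw [e] at this
      have hpow : (0:ℝ) < ((2:ℝ)⁻¹) ^ ((-k).toNat) := by positivity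
      have hmin : min ‖(tau A11 A12 A22 P k (c : H1 × H2)).2‖ 1 = 0 := by
        rcases mul_eq_zero.mp this with hc | hc
        · exact absurd hc hpow.ne'
        · exact hc
      rcases le_or_gt ‖(tau A11 A12 A22 P k (c : H1 × H2)).2‖ 1 with hle | hlt
      · rw [min_eq_left hle] at hmin
        exact norm_eq_zero.mp hmin
      · rw [min_eq_right hlt.le] at hmin
        norm_num at hmin
    have hcker : P 0 (c : H1 × H2) = 0 := c.2
    have hU1 : (c : H1 × H2).1 ∈ Uset A11 0 := h.mem_Uset_of_tau_snd hcker hz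
    have hZ : (c : H1 × H2).1 ∈ ((U1 A11 0)ᗮ : Submodule ℝ H1) := by
      have hclosed : IsClosed (((U1 A11 0)ᗮ : Submodule ℝ H1) : Set H1) :=
        Submodule.isClosed_orthogonal _
      exact (hclosed.mem_iff_infDist_zero ⟨0, Submodule.zero_mem _⟩).mpr hd
    have hinner : inner ℝ ((c : H1 × H2).1) ((c : H1 × H2).1) = (0:ℝ) :=
      Submodule.inner_right_of_mem_orthogonal hU1 hZ
    have hfst : (c : H1 × H2).1 = 0 := inner_self_eq_zero.mp hinner
    have hsnd : (c : H1 × H2).2 = 0 := norm_eq_zero.mp hn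
    have : (c : H1 × H2) = 0 := Prod.ext hfst hsnd
    rw [← norm_eq_zero] at this
    have : ‖c‖ = 0 := this
    rw [hc1] at this
    norm_num at this
  -- minimum of F on the sphere
  have hproper : ProperSpace ↥(LinearMap.ker (P 0 : (H1 × H2) →ₗ[ℝ] H1 × H2)) := inferInstance
  have hsph : (Metric.sphere (0 : ↥(LinearMap.ker (P 0 : (H1 × H2) →ₗ[ℝ] H1 × H2))) 1).Nonempty :=
    NormedSpace.sphere_nonempty.mpr zero_le_one
  obtain ⟨cmin, hcmin_mem, hcmin⟩ :=
    (isCompact_sphere (0 : ↥(LinearMap.ker (P 0 : (H1 × H2) →ₗ[ℝ] H1 × H2))) 1).exists_isMinOn hsph hFcont.continuousOn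
  set ρ : ℝ := F cmin with hρdef
  have hρ : 0 < ρ := hFpos cmin (by simpa using mem_sphere_zero_iff_norm.mp hcmin_mem)
  -- choice of the window size and the constant
  obtain ⟨j₃, hj₃⟩ : ∃ j : ℕ, ((2:ℝ)⁻¹) ^ j < ρ / 2 :=
    exists_pow_lt_of_lt_one (half_pos hρ) (by norm_num)
  set n₃ : ℤ := -(j₃ : ℤ) with hn₃
  obtain ⟨Cw, hCw⟩ := (((Set.finite_Icc n₃ (0:ℤ)).image
    (fun n => ‖Phi (triangular A11 A12 A22) 0 n‖ * (1 + K) * Real.exp (-(α * (n:ℝ)))))).bddAbove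
  set C : ℝ := max (max Cw ((8 * K / ρ) ^ 2)) 1 with hC
  have hC1 : (1:ℝ) ≤ C := le_max_right _ _
  have hC0 : (0:ℝ) < C := lt_of_lt_of_le one_pos hC1
  refine ⟨C, hC1, fun n hn v hvZ => ?_⟩
  by_cases hwin : n₃ ≤ n
  · -- window case
    have hBn : ‖Phi (triangular A11 A12 A22) 0 n‖ * (1 + K) * Real.exp (-(α * (n:ℝ))) ≤ Cw :=
      hCw ⟨n, Set.mem_Icc.2 ⟨hwin, hn⟩, rfl⟩
    have h1 := h.window_bound hn v
    have hexp : (0:ℝ) < Real.exp (α * (n:ℝ)) := Real.exp_pos _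
    have key : ‖Phi (triangular A11 A12 A22) 0 n‖ * (1 + K) ≤ Cw * Real.exp (α * (n:ℝ)) := by
      have h2 := mul_le_mul_of_nonneg_right hBn hexp.le
      calc ‖Phi (triangular A11 A12 A22) 0 n‖ * (1 + K)
          = ‖Phi (triangular A11 A12 A22) 0 n‖ * (1 + K) * Real.exp (-(α * (n:ℝ)))
              * Real.exp (α * (n:ℝ)) := by
            rw [mul_assoc, ← Real.exp_add]; simp
        _ ≤ Cw * Real.exp (α * (n:ℝ)) := h2
    calc ‖Phi (triangular A11 A12 A22) 0 n (((v, 0) : H1 × H2) - P n (v, 0))‖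
        ≤ ‖Phi (triangular A11 A12 A22) 0 n‖ * (1 + K) * ‖v‖ := h1
      _ ≤ Cw * Real.exp (α * (n:ℝ)) * ‖v‖ :=
          mul_le_mul_of_nonneg_right key (norm_nonneg v)
      _ ≤ C * Real.exp (α * (n:ℝ)) * ‖v‖ := by
          have hCwC : Cw ≤ C := le_trans (le_max_left _ _) (le_max_left _ _)
          exact mul_le_mul_of_nonneg_right
            (mul_le_mul_of_nonneg_right hCwC hexp.le) (norm_nonneg v)
  · -- deep case
    push_neg at hwin
    rcases le_or_gt ‖Phi (triangular A11 A12 A22) 0 n (((v, 0) : H1 × H2) - P n (v, 0))‖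
      (C * Real.exp (α * (n:ℝ)) * ‖v‖) with hok | hbig
    · exact hok
    exfalso
    set u : H1 × H2 := ((v, 0) : H1 × H2) - P n (v, 0) with hu_def
    set N : ℝ := ‖Phi (triangular A11 A12 A22) 0 n u‖ with hN_def
    have hu : P n u = 0 := h.u_mem_ker hn v
    have hN0 : 0 < N := lt_of_le_of_lt (by positivity) hbig
    have hv0 : v ≠ 0 := by
      intro hv
      rw [hv] at hu_def
      have hz : u = 0 := by rw [hu_def, Prod.mk_zero_zero, map_zero, sub_zero]
      rw [hz, map_zero, norm_zero] at hN_def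
      exact hN0.ne' hN_def
    have hvpos : 0 < ‖v‖ := norm_pos_iff.mpr hv0
    set ε : ℝ := Real.exp (α * (n:ℝ)) * ‖v‖ / N with hε
    have hε_pos : 0 < ε := by positivity
    have hεC : C * ε < 1 := by
      have he : C * ε = C * Real.exp (α * (n:ℝ)) * ‖v‖ / N := by rw [hε]; ring
      rw [he]
      exact (div_lt_one hN0).mpr hbig
    have hε1 : ε < 1 := by nlinarith [mul_le_mul_of_nonneg_right hC1 hε_pos.le]
    have hmem : Phi (triangular A11 A12 A22) 0 n u ∈ LinearMap.ker (P 0 : (H1 × H2) →ₗ[ℝ] H1 × H2) :=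
      LinearMap.mem_ker.mpr (h.ker_invariant hn le_rfl hu)
    set c : ↥(LinearMap.ker (P 0 : (H1 × H2) →ₗ[ℝ] H1 × H2)) :=
      ⟨N⁻¹ • Phi (triangular A11 A12 A22) 0 n u, Submodule.smul_mem _ _ hmem⟩ with hc_def
    have hc_coe : (c : H1 × H2) = N⁻¹ • Phi (triangular A11 A12 A22) 0 n u := rfl
    have hc1 : ‖c‖ = 1 := by
      have : ‖(c : H1 × H2)‖ = 1 := by
        rw [hc_coe, norm_smul, Real.norm_eq_abs, abs_of_pos (inv_pos.mpr hN0), ← hN_def,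
          inv_mul_cancel₀ hN0.ne']
      exact this
    have hρF : ρ ≤ F c := hcmin (mem_sphere_zero_iff_norm.mpr hc1)
    have hsqrt_nonneg : 0 ≤ Real.sqrt ε := Real.sqrt_nonneg _
    -- term (a)
    have hterm_a : Metric.infDist (c : H1 × H2).1
        (((U1 A11 0)ᗮ : Submodule ℝ H1) : Set H1) ≤ K * ε := by
      have hw : (N⁻¹ • Phi A11 0 n v) ∈ (U1 A11 0)ᗮ := Submodule.smul_mem _ _ hvZ
      refine (Metric.infDist_le_dist_of_mem hw).trans ?_
      rw [dist_eq_norm]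
      have h1 : (c : H1 × H2).1 - N⁻¹ • Phi A11 0 n v
          = N⁻¹ • ((Phi (triangular A11 A12 A22) 0 n u).1 - Phi A11 0 n v) := by
        rw [hc_coe, Prod.smul_fst, smul_sub]
      rw [h1, norm_smul, Real.norm_eq_abs, abs_of_pos (inv_pos.mpr hN0)]
      have h2 := h.fst_phi_u_bound hn le_rfl v
      have ecast : -α * ((((0:ℤ)):ℝ) - (n:ℝ)) = α * (n:ℝ) := by push_cast; ring
      rw [ecast] at h2
      have h3 : N⁻¹ * ‖(Phi (triangular A11 A12 A22) 0 n u).1 - Phi A11 0 n v‖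
          ≤ N⁻¹ * (K * Real.exp (α * (n:ℝ)) * ‖v‖) :=
        mul_le_mul_of_nonneg_left h2 (inv_pos.mpr hN0).le
      refine h3.trans (le_of_eq ?_)
      rw [hε]; field_simp
    -- term (b)
    have hterm_b : ‖(c : H1 × H2).2‖ ≤ K * ε := by
      have h1 : (c : H1 × H2).2 = N⁻¹ • (Phi (triangular A11 A12 A22) 0 n u).2 := by
        rw [hc_coe, Prod.smul_snd]
      rw [h1, norm_smul, Real.norm_eq_abs, abs_of_pos (inv_pos.mpr hN0)]
      have h2 := h.snd_phi_u_bound hn le_rfl v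
      have ecast : -α * ((((0:ℤ)):ℝ) - (n:ℝ)) = α * (n:ℝ) := by push_cast; ring
      rw [ecast] at h2
      have h3 : N⁻¹ * ‖(Phi (triangular A11 A12 A22) 0 n u).2‖
          ≤ N⁻¹ * (K * Real.exp (α * (n:ℝ)) * ‖v‖) :=
        mul_le_mul_of_nonneg_left h2 (inv_pos.mpr hN0).le
      refine h3.trans (le_of_eq ?_)
      rw [hε]; field_simp
    -- term (c) : head terms
    set J : ℕ := (-n).toNat with hJ
    have hj₃J : j₃ ≤ J := by omega
    have hhead : ∀ j : ℕ, j ≤ J → g j c ≤ ((2:ℝ)⁻¹) ^ j * (K * Real.sqrt ε) := by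
      intro j hj
      set k : ℤ := -(j:ℤ) with hkdef
      have hnk : n ≤ k := by omega
      have hk0 : k ≤ 0 := by omega
      have htauc : tau A11 A12 A22 P k (c : H1 × H2)
          = N⁻¹ • Phi (triangular A11 A12 A22) k n u := by
        rw [hc_coe]
        exact h.tau_of_scaled_phi hnk hk0 N⁻¹ hu
      have hb1 : ‖(tau A11 A12 A22 P k (c : H1 × H2)).2‖
          ≤ K * ε * Real.exp (-(α * (k:ℝ))) := by
        rw [htauc, Prod.smul_snd, norm_smul, Real.norm_eq_abs,
          abs_of_pos (inv_pos.mpr hN0)]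
        have h2 := h.snd_phi_u_bound hnk hk0 v
        have hsplit : Real.exp (-α * ((k:ℝ) - (n:ℝ)))
            = Real.exp (-(α * (k:ℝ))) * Real.exp (α * (n:ℝ)) := by
          rw [← Real.exp_add]; ring_nf
        rw [hsplit] at h2
        have h3 : N⁻¹ * ‖(Phi (triangular A11 A12 A22) k n u).2‖
            ≤ N⁻¹ * (K * (Real.exp (-(α * (k:ℝ))) * Real.exp (α * (n:ℝ))) * ‖v‖) :=
          mul_le_mul_of_nonneg_left h2 (inv_pos.mpr hN0).le
        refine h3.trans (le_of_eq ?_)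
        rw [hε]; field_simp
      have hb2 : ‖(tau A11 A12 A22 P k (c : H1 × H2)).2‖ ≤ K * Real.exp (α * (k:ℝ)) := by
        have hcc : P 0 (c : H1 × H2) = 0 := c.2
        have := h.tau_norm hk0 hcc
        have hcn : ‖(c : H1 × H2)‖ = 1 := hc1
        rw [hcn, mul_one] at this
        exact (norm_snd_le _).trans this
      have hminb : min ‖(tau A11 A12 A22 P k (c : H1 × H2)).2‖ 1 ≤ K * Real.sqrt ε := by
        set b := min ‖(tau A11 A12 A22 P k (c : H1 × H2)).2‖ 1 with hb
        have hb0 : 0 ≤ b := le_min (norm_nonneg _) one_pos.le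
        have hbsq : b ^ 2 ≤ K ^ 2 * ε := by
          have h1 : b ≤ K * ε * Real.exp (-(α * (k:ℝ))) := (min_le_left _ _).trans hb1
          have h2 : b ≤ K * Real.exp (α * (k:ℝ)) := (min_le_left _ _).trans hb2
          have hprod : (K * ε * Real.exp (-(α * (k:ℝ)))) * (K * Real.exp (α * (k:ℝ)))
              = K ^ 2 * ε := by
            have he : Real.exp (-(α * (k:ℝ))) * Real.exp (α * (k:ℝ)) = 1 := by
              rw [← Real.exp_add]; simp
            linear_combination K ^ 2 * ε * he
          calc b ^ 2 = b * b := sq b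
            _ ≤ (K * ε * Real.exp (-(α * (k:ℝ)))) * (K * Real.exp (α * (k:ℝ))) := by
                apply mul_le_mul h1 h2 hb0
                positivity
            _ = K ^ 2 * ε := hprod
        have : b ≤ Real.sqrt (K ^ 2 * ε) := (Real.le_sqrt hb0 (by positivity)).mpr hbsq
        refine this.trans (le_of_eq ?_)
        rw [Real.sqrt_mul (sq_nonneg K), Real.sqrt_sq hK0.le]
      calc g j c = ((2:ℝ)⁻¹) ^ j * min ‖(tau A11 A12 A22 P (-(j:ℤ)) (c : H1 × H2)).2‖ 1 := rfl
        _ ≤ ((2:ℝ)⁻¹) ^ j * (K * Real.sqrt ε) :=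
            mul_le_mul_of_nonneg_left (by rw [← hkdef]; exact hminb) (by positivity)
    -- term (c) : assembling the sum
    have hsum_bound : ∑' j : ℕ, g j c ≤ 2 * (K * Real.sqrt ε) + ((2:ℝ)⁻¹) ^ j₃ := by
      rw [← Summable.sum_add_tsum_nat_add (J + 1) (hsummable c)]
      have hhead_sum : ∑ j ∈ Finset.range (J + 1), g j c
          ≤ 2 * (K * Real.sqrt ε) := by
        have h1 : ∑ j ∈ Finset.range (J + 1), g j c
            ≤ ∑ j ∈ Finset.range (J + 1), ((2:ℝ)⁻¹) ^ j * (K * Real.sqrt ε) := by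
          refine Finset.sum_le_sum (fun j hj => ?_)
          have hj' := Finset.mem_range.mp hj
          exact hhead j (by omega)
        have h2 : ∑ j ∈ Finset.range (J + 1), ((2:ℝ)⁻¹) ^ j * (K * Real.sqrt ε)
            = (∑ j ∈ Finset.range (J + 1), ((2:ℝ)⁻¹) ^ j) * (K * Real.sqrt ε) :=
          (Finset.sum_mul _ _ _).symm
        have h3 : ∑ j ∈ Finset.range (J + 1), ((2:ℝ)⁻¹) ^ j ≤ 2 := by
          have := Summable.sum_le_tsum (Finset.range (J + 1))
            (fun j _ => by positivity : ∀ j ∉ Finset.range (J+1), (0:ℝ) ≤ ((2:ℝ)⁻¹) ^ j)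
            hgeom_sum
          rwa [hgeom_val] at this
        calc ∑ j ∈ Finset.range (J + 1), g j c
            ≤ (∑ j ∈ Finset.range (J + 1), ((2:ℝ)⁻¹) ^ j) * (K * Real.sqrt ε) := by
              rw [← h2]; exact h1
          _ ≤ 2 * (K * Real.sqrt ε) :=
              mul_le_mul_of_nonneg_right h3 (by positivity)
      have htail : ∑' j : ℕ, g (j + (J + 1)) c ≤ ((2:ℝ)⁻¹) ^ j₃ := by
        have hsummable_shift : Summable (fun j : ℕ => g (j + (J + 1)) c) :=
          (summable_nat_add_iff (J + 1)).mpr (hsummable c)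
        have hsummable_geo_shift : Summable (fun j : ℕ => ((2:ℝ)⁻¹) ^ (j + (J + 1))) :=
          (summable_nat_add_iff (J + 1)).mpr hgeom_sum
        have h1 : ∑' j : ℕ, g (j + (J + 1)) c ≤ ∑' j : ℕ, ((2:ℝ)⁻¹) ^ (j + (J + 1)) :=
          Summable.tsum_le_tsum (fun j => hg_le _ c) hsummable_shift hsummable_geo_shift
        have h2 : ∑' j : ℕ, ((2:ℝ)⁻¹) ^ (j + (J + 1)) = 2 * ((2:ℝ)⁻¹) ^ (J + 1) := by
          have : ∀ j : ℕ, ((2:ℝ)⁻¹) ^ (j + (J + 1)) = ((2:ℝ)⁻¹) ^ j * ((2:ℝ)⁻¹) ^ (J + 1) :=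
            fun j => pow_add _ _ _
          rw [tsum_congr this, tsum_mul_right, hgeom_val]
        have h3 : 2 * ((2:ℝ)⁻¹) ^ (J + 1) = ((2:ℝ)⁻¹) ^ J := by
          rw [pow_succ]; ring
        have h4 : ((2:ℝ)⁻¹) ^ J ≤ ((2:ℝ)⁻¹) ^ j₃ :=
          pow_le_pow_of_le_one (by norm_num) (by norm_num) hj₃J
        calc ∑' j : ℕ, g (j + (J + 1)) c ≤ 2 * ((2:ℝ)⁻¹) ^ (J + 1) := by rw [← h2]; exact h1
          _ = ((2:ℝ)⁻¹) ^ J := h3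
          _ ≤ ((2:ℝ)⁻¹) ^ j₃ := h4
      exact add_le_add hhead_sum htail
    -- final contradiction
    have hKε_le : K * ε ≤ K * Real.sqrt ε := by
      have h1 : ε ≤ Real.sqrt ε := by
        have h2 : ε * ε ≤ ε := by nlinarith
        calc ε = Real.sqrt (ε * ε) := (Real.sqrt_mul_self hε_pos.le).symm
          _ ≤ Real.sqrt ε := Real.sqrt_le_sqrt h2
      exact mul_le_mul_of_nonneg_left h1 hK0.le
    have hsqrt_lt : Real.sqrt ε < ρ / (8 * K) := by
      have h8 : (8 * K / ρ) ^ 2 ≤ C := le_trans (le_max_right _ _) (le_max_left _ _)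
      have hinv : (ρ / (8 * K)) ^ 2 * (8 * K / ρ) ^ 2 = 1 := by
        field_simp
      have hε2 : ε < (ρ / (8 * K)) ^ 2 := by nlinarith [sq_nonneg (8 * K / ρ)]
      have := Real.sqrt_lt_sqrt hε_pos.le hε2
      rwa [Real.sqrt_sq (by positivity : (0:ℝ) ≤ ρ / (8 * K))] at this
    have hFc_le : F c ≤ 4 * (K * Real.sqrt ε) + ((2:ℝ)⁻¹) ^ j₃ := by
      have : F c = Metric.infDist (c : H1 × H2).1
          (((U1 A11 0)ᗮ : Submodule ℝ H1) : Set H1)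
          + ‖(c : H1 × H2).2‖ + ∑' j : ℕ, g j c := rfl
      rw [this]
      linarith [hterm_a, hterm_b, hsum_bound, hKε_le]
    have hfinal : 4 * (K * Real.sqrt ε) < ρ / 2 := by
      have h49 : 4 * K * (ρ / (8 * K)) = ρ / 2 := by field_simp; ring
      nlinarith [mul_lt_mul_of_pos_left hsqrt_lt (by positivity : (0:ℝ) < 4 * K)]
    have : ρ < ρ := by
      calc ρ ≤ F c := hρF
        _ ≤ 4 * (K * Real.sqrt ε) + ((2:ℝ)⁻¹) ^ j₃ := hFc_le
        _ < ρ / 2 + ρ / 2 := by linarith [hj₃]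
        _ = ρ := by ring
    exact this.false

end Dicho

/-- General angle/gap lemma: a finite-dimensional subspace and a closed subspace meeting
trivially have a positive gap. -/
lemma gap_lemma {E : Type u} [NormedAddCommGroup E] [NormedSpace ℝ E]
    (U S : Submodule ℝ E) [FiniteDimensional ℝ ↥U] (hclosed : IsClosed (S : Set E))
    (hdisj : ∀ x, x ∈ U → x ∈ S → x = 0) :
    ∃ Γ : ℝ, 1 ≤ Γ ∧ ∀ u ∈ U, ∀ s ∈ S, ‖u‖ ≤ Γ * ‖u + s‖ := by
  rcases subsingleton_or_nontrivial ↥U with hss | hnt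
  · refine ⟨1, le_rfl, fun u hu s hs => ?_⟩
    have : (⟨u, hu⟩ : ↥U) = 0 := Subsingleton.elim _ _
    have hu0 : u = 0 := by simpa using congrArg Subtype.val this
    rw [hu0, norm_zero]
    positivity
  · have hsph : (Metric.sphere (0 : ↥U) 1).Nonempty :=
      NormedSpace.sphere_nonempty.mpr zero_le_one
    have hFcont : Continuous (fun x : ↥U => Metric.infDist (x : E) (S : Set E)) :=
      (Metric.continuous_infDist_pt _).comp continuous_subtype_val
    obtain ⟨x₀, hx₀_mem, hx₀⟩ :=
      (isCompact_sphere (0 : ↥U) 1).exists_isMinOn hsph hFcont.continuousOn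
    set γ : ℝ := Metric.infDist (x₀ : E) (S : Set E) with hγdef
    have hx₀norm : ‖x₀‖ = 1 := by simpa using mem_sphere_zero_iff_norm.mp hx₀_mem
    have hγpos : 0 < γ := by
      have h0 : (0:ℝ) ≤ Metric.infDist (x₀ : E) (S : Set E) := Metric.infDist_nonneg
      rcases h0.lt_or_eq with hlt | heq
      · exact hlt
      · exfalso
        have : (x₀ : E) ∈ S :=
          (hclosed.mem_iff_infDist_zero ⟨0, Submodule.zero_mem _⟩).mpr heq.symm
        have hx0 : (x₀ : E) = 0 := hdisj _ x₀.2 this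
        have : ‖x₀‖ = 0 := by rw [← norm_eq_zero] at hx0; exact hx0
        rw [hx₀norm] at this; norm_num at this
    refine ⟨max γ⁻¹ 1, le_max_right _ _, fun u hu s hs => ?_⟩
    rcases eq_or_ne u 0 with hu0 | hu0
    · rw [hu0, norm_zero]
      positivity
    · have hupos : 0 < ‖u‖ := norm_pos_iff.mpr hu0
      have hx' : (‖u‖⁻¹ • ⟨u, hu⟩ : ↥U) ∈ Metric.sphere (0 : ↥U) 1 := by
        rw [mem_sphere_zero_iff_norm, norm_smul, Real.norm_eq_abs,
          abs_of_pos (inv_pos.mpr hupos)]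
        have : ‖(⟨u, hu⟩ : ↥U)‖ = ‖u‖ := rfl
        rw [this, inv_mul_cancel₀ hupos.ne']
      have hmin := hx₀ hx'
      have hdist : Metric.infDist ((‖u‖⁻¹ • ⟨u, hu⟩ : ↥U) : E) (S : Set E)
          ≤ ‖u‖⁻¹ * ‖u + s‖ := by
        have hmem : (-(‖u‖⁻¹ • s)) ∈ (S : Set E) :=
          Submodule.neg_mem _ (Submodule.smul_mem _ _ hs)
        refine (Metric.infDist_le_dist_of_mem hmem).trans (le_of_eq ?_)
        rw [dist_eq_norm]
        have : ((‖u‖⁻¹ • ⟨u, hu⟩ : ↥U) : E) - -(‖u‖⁻¹ • s) = ‖u‖⁻¹ • (u + s) := by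
          rw [sub_neg_eq_add]
          show ‖u‖⁻¹ • u + ‖u‖⁻¹ • s = ‖u‖⁻¹ • (u + s)
          rw [smul_add]
        rw [this, norm_smul, Real.norm_eq_abs, abs_of_pos (inv_pos.mpr hupos)]
      have h1 : γ ≤ ‖u‖⁻¹ * ‖u + s‖ := le_trans hmin hdist
      have h2 : γ * ‖u‖ ≤ ‖u + s‖ := by
        have := mul_le_mul_of_nonneg_right h1 hupos.le
        calc γ * ‖u‖ ≤ ‖u‖⁻¹ * ‖u + s‖ * ‖u‖ := this
          _ = ‖u + s‖ := by field_simp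
      calc ‖u‖ = γ⁻¹ * (γ * ‖u‖) := by field_simp
        _ ≤ γ⁻¹ * ‖u + s‖ := mul_le_mul_of_nonneg_left h2 (inv_pos.mpr hγpos).le
        _ ≤ max γ⁻¹ 1 * ‖u + s‖ :=
            mul_le_mul_of_nonneg_right (le_max_left _ _) (norm_nonneg _)

/-- The candidate stable subspace at time `n`. -/
noncomputable def Sstable (A11 : ℤ → H1 →L[ℝ] H1) (n : ℤ) : Submodule ℝ H1 :=
  Submodule.comap (Phi A11 0 n : H1 →ₗ[ℝ] H1) ((U1 A11 0)ᗮ)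

lemma Sstable_closed (A11 : ℤ → H1 →L[ℝ] H1) (n : ℤ) :
    IsClosed ((Sstable A11 n : Submodule ℝ H1) : Set H1) := by
  have : ((Sstable A11 n : Submodule ℝ H1) : Set H1)
      = (Phi A11 0 n) ⁻¹' (((U1 A11 0)ᗮ : Submodule ℝ H1) : Set H1) := rfl
  rw [this]
  exact (Submodule.isClosed_orthogonal _).preimage (Phi A11 0 n).continuous

lemma mem_Sstable {A11 : ℤ → H1 →L[ℝ] H1} {n : ℤ} {v : H1} :
    v ∈ Sstable A11 n ↔ Phi A11 0 n v ∈ (U1 A11 0)ᗮ := Submodule.mem_comap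

namespace Dicho
variable (h : Dicho (triangular A11 A12 A22) P K α)
include h

lemma U1_Sstable_disjoint {n : ℤ} (hn : n ≤ 0) {v : H1}
    (hU : v ∈ U1 A11 n) (hS : v ∈ Sstable A11 n) : v = 0 := by
  have h1 : Phi A11 0 n v ∈ U1 A11 0 := Uset.phi_mem hU hn
  have h2 : Phi A11 0 n v ∈ (U1 A11 0)ᗮ := mem_Sstable.mp hS
  have h3 : Phi A11 0 n v = 0 :=
    inner_self_eq_zero.mp (Submodule.inner_right_of_mem_orthogonal h1 h2)
  exact h.U1_phi_inj hn le_rfl hU h3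

lemma isCompl_U1_Sstable {n : ℤ} (hn : n ≤ 0)
    [FiniteDimensional ℝ ↥(LinearMap.ker (P 0 : (H1 × H2) →ₗ[ℝ] H1 × H2))] :
    IsCompl (U1 A11 n) (Sstable A11 n) := by
  haveI : FiniteDimensional ℝ ↥(U1 A11 0) := h.findim_U1 0 le_rfl
  constructor
  · rw [Submodule.disjoint_def]
    exact fun x hU hS => h.U1_Sstable_disjoint hn hU hS
  · rw [codisjoint_iff, Submodule.eq_top_iff']
    intro x
    rw [Submodule.mem_sup]
    set w : H1 := Phi A11 0 n x with hw
    set u₀ : H1 := (Submodule.orthogonalProjection (U1 A11 0) w : H1) with hu₀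
    have hu₀mem : u₀ ∈ U1 A11 0 := (Submodule.orthogonalProjection (U1 A11 0) w).2
    obtain ⟨u, hu, hphi⟩ := Uset.exists_past hu₀mem hn
    refine ⟨u, hu, x - u, ?_, by abel⟩
    rw [mem_Sstable, map_sub, hphi]
    exact Submodule.sub_starProjection_mem_orthogonal (K := U1 A11 0) w

lemma exists_P1 [FiniteDimensional ℝ ↥(LinearMap.ker (P 0 : (H1 × H2) →ₗ[ℝ] H1 × H2))] {Γ : ℝ} (hΓ1 : 1 ≤ Γ)
    (hgap : ∀ n : ℤ, n ≤ 0 → ∀ u ∈ U1 A11 n, ∀ s ∈ Sstable A11 n, ‖u‖ ≤ Γ * ‖u + s‖) :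
    ∃ P1 : ℤ → H1 →L[ℝ] H1, ∀ n : ℤ, n ≤ 0 →
      (∀ v : H1, v - P1 n v ∈ U1 A11 n) ∧ (∀ v : H1, P1 n v ∈ Sstable A11 n) ∧
      (∀ v ∈ U1 A11 n, P1 n v = 0) ∧ (∀ v ∈ Sstable A11 n, P1 n v = v) ∧
      (∀ v : H1, ‖v - P1 n v‖ ≤ Γ * ‖v‖) := by
  have hex : ∀ n : ℤ, ∃ Q : H1 →L[ℝ] H1, n ≤ 0 →
      (∀ v : H1, v - Q v ∈ U1 A11 n) ∧ (∀ v : H1, Q v ∈ Sstable A11 n) ∧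
      (∀ v ∈ U1 A11 n, Q v = 0) ∧ (∀ v ∈ Sstable A11 n, Q v = v) ∧
      (∀ v : H1, ‖v - Q v‖ ≤ Γ * ‖v‖) := by
    intro n
    by_cases hn : n ≤ 0
    · have hcompl : IsCompl (U1 A11 n) (Sstable A11 n) := h.isCompl_U1_Sstable hn
      set prS : H1 →ₗ[ℝ] ↥(Sstable A11 n) :=
        (Sstable A11 n).linearProjOfIsCompl (U1 A11 n) hcompl.symm with hprS
      set Q₀ : H1 →ₗ[ℝ] H1 := (Sstable A11 n).subtype.comp prS with hQ₀
      have hQ₀mem : ∀ v : H1, Q₀ v ∈ Sstable A11 n := fun v => (prS v).2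
      have hUpart : ∀ v : H1, v - Q₀ v ∈ U1 A11 n := by
        intro v
        have : prS (v - Q₀ v) = 0 := by
          rw [map_sub]
          have : prS (Q₀ v) = prS v := by
            rw [hQ₀]
            exact Submodule.linearProjOfIsCompl_apply_left hcompl.symm (prS v)
          rw [this, sub_self]
        exact (Submodule.linearProjOfIsCompl_apply_eq_zero_iff hcompl.symm).mp this
      have hbound : ∀ v : H1, ‖v - Q₀ v‖ ≤ Γ * ‖v‖ := by
        intro v
        have h1 := hgap n hn (v - Q₀ v) (hUpart v) (Q₀ v) (hQ₀mem v)
        have h2 : v - Q₀ v + Q₀ v = v := by abel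
        rwa [h2] at h1
      have hQbound : ∀ v : H1, ‖Q₀ v‖ ≤ (1 + Γ) * ‖v‖ := by
        intro v
        calc ‖Q₀ v‖ = ‖v - (v - Q₀ v)‖ := congrArg norm (by abel)
          _ ≤ ‖v‖ + ‖v - Q₀ v‖ := norm_sub_le _ _
          _ ≤ ‖v‖ + Γ * ‖v‖ := add_le_add_right (hbound v) _
          _ = (1 + Γ) * ‖v‖ := by ring
      refine ⟨LinearMap.mkContinuous Q₀ (1 + Γ) hQbound, fun _ => ?_⟩
      refine ⟨hUpart, hQ₀mem, ?_, ?_, hbound⟩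
      · intro v hv
        have : prS v = 0 := by
          rw [hprS]
          exact (Submodule.linearProjOfIsCompl_apply_eq_zero_iff hcompl.symm).mpr hv
        show Q₀ v = 0
        rw [hQ₀]
        simp [LinearMap.comp_apply, this]
      · intro v hv
        show Q₀ v = v
        rw [hQ₀]
        have : prS v = ⟨v, hv⟩ := by
          rw [hprS]
          exact Submodule.linearProjOfIsCompl_apply_left hcompl.symm ⟨v, hv⟩
        simp [LinearMap.comp_apply, this]
    · exact ⟨0, fun hn' => absurd hn' hn⟩
  choose P1 hP1 using hex
  exact ⟨P1, fun n hn => hP1 n hn⟩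

set_option maxHeartbeats 1000000 in
lemma gap_uniform [FiniteDimensional ℝ ↥(LinearMap.ker (P 0 : (H1 × H2) →ₗ[ℝ] H1 × H2))] :
    ∃ Γ : ℝ, 1 ≤ Γ ∧ ∀ n : ℤ, n ≤ 0 →
      ∀ u ∈ U1 A11 n, ∀ s ∈ Sstable A11 n, ‖u‖ ≤ Γ * ‖u + s‖ := by
  have hK0 : (0:ℝ) < K := lt_of_lt_of_le one_pos h.hK
  obtain ⟨C, hC1, hCest⟩ := h.main_estimate
  have hC0 : (0:ℝ) < C := lt_of_lt_of_le one_pos hC1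
  obtain ⟨j₂, hj₂⟩ : ∃ j : ℕ, (Real.exp (-(2*α)))^j < 1/(2*K*C) :=
    exists_pow_lt_of_lt_one (by positivity) (Real.exp_lt_one_iff.mpr (by linarith [h.hα]))
  set n₂ : ℤ := -(j₂ : ℤ) with hn₂def
  have hn₂0 : n₂ ≤ 0 := by omega
  -- deep estimate
  have hdeep : ∀ n : ℤ, n ≤ n₂ → ∀ u ∈ U1 A11 n, ∀ s ∈ Sstable A11 n,
      ‖u‖ ≤ (3 + 2*K) * ‖u + s‖ := by
    intro n hn2 u hu s hs
    have hn : n ≤ 0 := le_trans hn2 hn₂0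
    set ω : H1 × H2 := ((s, 0) : H1 × H2) - P n (s, 0) with hωdef
    have hPu : P n ((u, 0) : H1 × H2) = 0 := h.mem_ker_of_Uset hn hu
    have hδ : ((u + s, 0) : H1 × H2) - P n ((u + s, 0)) = ((u, 0) : H1 × H2) + ω := by
      have e1 : ((u + s, 0) : H1 × H2) = ((u, 0) : H1 × H2) + ((s, 0) : H1 × H2) := by
        rw [Prod.mk_add_mk, add_zero]
      rw [e1, map_add, hPu, hωdef]
      abel
    have h1 : ‖((u, 0) : H1 × H2) + ω‖ ≤ (1 + K) * ‖u + s‖ := by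
      rw [← hδ]
      calc ‖((u + s, 0) : H1 × H2) - P n ((u + s, 0))‖
          ≤ ‖((u + s, 0) : H1 × H2)‖ + ‖P n ((u + s, 0) : H1 × H2)‖ := norm_sub_le _ _
        _ ≤ ‖u + s‖ + K * ‖u + s‖ := by
            rw [norm_pair]
            refine add_le_add_right ?_ _
            refine ((P n).le_opNorm _).trans ?_
            rw [norm_pair]
            exact mul_le_mul_of_nonneg_right (h.norm_P_le hn) (norm_nonneg _)
        _ = (1 + K) * ‖u + s‖ := by ring
    have hωker : P n ω = 0 := h.u_mem_ker hn s
    have h2 : ‖ω‖ ≤ K * Real.exp (α * (n:ℝ))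
        * ‖Phi (triangular A11 A12 A22) 0 n ω‖ := by
      have := h.unst_apply hn hn le_rfl hωker
      have e : -α * ((((0:ℤ)):ℝ) - (n:ℝ)) = α * (n:ℝ) := by push_cast; ring
      rwa [e] at this
    have h3 : ‖Phi (triangular A11 A12 A22) 0 n ω‖ ≤ C * Real.exp (α * (n:ℝ)) * ‖s‖ :=
      hCest n hn s (mem_Sstable.mp hs)
    have h4 : ‖s‖ ≤ ‖u + s‖ + ‖u‖ := by
      have h4' := norm_sub_le (u + s) u
      rwa [add_sub_cancel_left] at h4'
    have h5 : ‖u‖ ≤ ‖((u, 0) : H1 × H2) + ω‖ + ‖ω‖ := by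
      have : ((u, 0) : H1 × H2) = (((u, 0) : H1 × H2) + ω) - ω := by abel
      calc ‖u‖ = ‖((u, 0) : H1 × H2)‖ := (norm_pair u).symm
        _ = ‖(((u, 0) : H1 × H2) + ω) - ω‖ := by rw [← this]
        _ ≤ ‖((u, 0) : H1 × H2) + ω‖ + ‖ω‖ := norm_sub_le _ _
    have hhalf : K * Real.exp (α * (n:ℝ)) * (C * Real.exp (α * (n:ℝ))) ≤ 1/2 := by
      have e1 : Real.exp (α * (n:ℝ)) * Real.exp (α * (n:ℝ)) = Real.exp (2*α*(n:ℝ)) := by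
        rw [← Real.exp_add]; ring_nf
      have e2 : Real.exp (2*α*(n:ℝ)) ≤ Real.exp (2*α*((n₂:ℤ):ℝ)) := by
        rw [Real.exp_le_exp]
        have : (n:ℝ) ≤ ((n₂:ℤ):ℝ) := by exact_mod_cast hn2
        nlinarith [h.hα]
      have e3 : Real.exp (2*α*((n₂:ℤ):ℝ)) = (Real.exp (-(2*α)))^j₂ := by
        rw [← Real.exp_nat_mul]
        congr 1
        rw [hn₂def]
        push_cast
        ring
      have e4 : K * C * Real.exp (2*α*(n:ℝ)) ≤ K * C * ((Real.exp (-(2*α)))^j₂) := by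
        refine mul_le_mul_of_nonneg_left ?_ (by positivity)
        rw [← e3]; exact e2
      have e5 : K * C * ((Real.exp (-(2*α)))^j₂) < K * C * (1/(2*K*C)) :=
        mul_lt_mul_of_pos_left hj₂ (by positivity)
      have e6 : K * C * (1/(2*K*C)) = 1/2 := by field_simp
      calc K * Real.exp (α * (n:ℝ)) * (C * Real.exp (α * (n:ℝ)))
          = K * C * Real.exp (2*α*(n:ℝ)) := by rw [← e1]; ring
        _ ≤ K * C * ((Real.exp (-(2*α)))^j₂) := e4
        _ ≤ 1/2 := by rw [← e6]; exact e5.le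
    -- combine
    have h6 : ‖ω‖ ≤ 1/2 * (‖u + s‖ + ‖u‖) := by
      have hc1 : ‖ω‖ ≤ K * Real.exp (α * (n:ℝ)) * (C * Real.exp (α * (n:ℝ)) * ‖s‖) :=
        h2.trans (mul_le_mul_of_nonneg_left h3 (by positivity))
      have hc2 : C * Real.exp (α * (n:ℝ)) * ‖s‖ ≥ 0 := by positivity
      have hc3 : K * Real.exp (α * (n:ℝ)) * (C * Real.exp (α * (n:ℝ)) * ‖s‖)
          = (K * Real.exp (α * (n:ℝ)) * (C * Real.exp (α * (n:ℝ)))) * ‖s‖ := by ring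
      have hc4 : ‖ω‖ ≤ 1/2 * ‖s‖ := by
        rw [hc3] at hc1
        exact hc1.trans (mul_le_mul_of_nonneg_right hhalf (norm_nonneg s))
      exact hc4.trans (by linarith)
    linarith
  -- window gaps
  have hwin : ∀ n : ℤ, ∃ Γn : ℝ, 1 ≤ Γn ∧ (n₂ ≤ n → n ≤ 0 →
      ∀ u ∈ U1 A11 n, ∀ s ∈ Sstable A11 n, ‖u‖ ≤ Γn * ‖u + s‖) := by
    intro n
    by_cases hn : n ≤ 0
    · haveI := h.findim_U1 n hn
      obtain ⟨Γn, hΓn1, hΓn⟩ := gap_lemma (U1 A11 n) (Sstable A11 n)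
        (Sstable_closed A11 n) (fun x hU hS => h.U1_Sstable_disjoint hn hU hS)
      exact ⟨Γn, hΓn1, fun _ _ => hΓn⟩
    · exact ⟨1, le_rfl, fun _ hn' => absurd hn' hn⟩
  choose Γf hΓf1 hΓf2 using hwin
  obtain ⟨B, hB⟩ := ((Set.finite_Icc n₂ (0:ℤ)).image Γf).bddAbove
  refine ⟨max (max B (3 + 2*K)) 1, le_max_right _ _, fun n hn u hu s hs => ?_⟩
  by_cases hcase : n ≤ n₂
  · refine (hdeep n hcase u hu s hs).trans ?_
    refine mul_le_mul_of_nonneg_right ?_ (norm_nonneg _)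
    exact le_trans (le_max_right _ _) (le_max_left _ _)
  · push_neg at hcase
    have h1 := hΓf2 n hcase.le hn u hu s hs
    refine h1.trans (mul_le_mul_of_nonneg_right ?_ (norm_nonneg _))
    have : Γf n ≤ B := hB ⟨n, Set.mem_Icc.2 ⟨hcase.le, hn⟩, rfl⟩
    exact le_trans this (le_trans (le_max_left _ _) (le_max_left _ _))

lemma Sstable_step {n : ℤ} (hn : n ≤ -1) {x : H1} (hx : x ∈ Sstable A11 n) :
    A11 n x ∈ Sstable A11 (n + 1) := by
  rw [mem_Sstable] at hx ⊢
  have e1 : Phi A11 0 (n + 1) (Phi A11 (n + 1) n x) = Phi A11 0 n x :=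
    Phi_comp A11 (by omega) (by omega) x
  have e2 : Phi A11 (n + 1) n x = A11 n x := Phi_step A11 n x
  rw [e2] at e1
  rwa [e1]

omit h in
lemma U1_sub {n : ℤ} {x y : H1} (hx : x ∈ U1 A11 n) (hy : y ∈ U1 A11 n) :
    x - y ∈ U1 A11 n := Submodule.sub_mem _ hx hy

set_option maxHeartbeats 1000000 in
lemma dichotomy_A11 [FiniteDimensional ℝ ↥(LinearMap.ker (P 0 : (H1 × H2) →ₗ[ℝ] H1 × H2))] :
    ExpDichotomy {n : ℤ | n ≤ 0} {n : ℤ | n ≤ -1} A11 := by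
  have hK0 : (0:ℝ) < K := lt_of_lt_of_le one_pos h.hK
  obtain ⟨C, hC1, hCest⟩ := h.main_estimate
  have hC0 : (0:ℝ) < C := lt_of_lt_of_le one_pos hC1
  obtain ⟨Γ, hΓ1, hgap⟩ := h.gap_uniform
  have hΓ0 : (0:ℝ) < Γ := lt_of_lt_of_le one_pos hΓ1
  obtain ⟨P1, hP1⟩ := h.exists_P1 hΓ1 hgap
  -- notation for the bundle facts
  have hU : ∀ n ≤ (0:ℤ), ∀ v : H1, v - P1 n v ∈ U1 A11 n := fun n hn => (hP1 n hn).1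
  have hS : ∀ n ≤ (0:ℤ), ∀ v : H1, P1 n v ∈ Sstable A11 n := fun n hn => (hP1 n hn).2.1
  have hZ : ∀ n ≤ (0:ℤ), ∀ v ∈ U1 A11 n, P1 n v = 0 := fun n hn => (hP1 n hn).2.2.1
  have hid : ∀ n ≤ (0:ℤ), ∀ v ∈ Sstable A11 n, P1 n v = v := fun n hn => (hP1 n hn).2.2.2.1
  have hbd : ∀ n ≤ (0:ℤ), ∀ v : H1, ‖v - P1 n v‖ ≤ Γ * ‖v‖ := fun n hn => (hP1 n hn).2.2.2.2
  have hker : ∀ n ≤ (0:ℤ), ∀ v : H1, (P1 n v = 0 ↔ v ∈ U1 A11 n) := by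
    intro n hn v
    constructor
    · intro hv
      have := hU n hn v
      rwa [hv, sub_zero] at this
    · exact hZ n hn v
  have hP1bd : ∀ n ≤ (0:ℤ), ∀ v : H1, ‖P1 n v‖ ≤ (1 + Γ) * ‖v‖ := by
    intro n hn v
    calc ‖P1 n v‖ = ‖v - (v - P1 n v)‖ := congrArg norm (by abel)
      _ ≤ ‖v‖ + ‖v - P1 n v‖ := norm_sub_le _ _
      _ ≤ ‖v‖ + Γ * ‖v‖ := add_le_add_right (hbd n hn v) _
      _ = (1 + Γ) * ‖v‖ := by ring
  -- the stable estimate for vectors of `Sstable`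
  have hstab : ∀ m n : ℤ, m ≤ 0 → n ≤ m → ∀ s ∈ Sstable A11 n,
      ‖Phi A11 m n s‖ ≤ (K + K * C) * Real.exp (-α * ((m:ℝ) - (n:ℝ))) * ‖s‖ := by
    intro m n hm hnm s hs
    have hn : n ≤ 0 := hnm.trans hm
    set ω : H1 × H2 := ((s, 0) : H1 × H2) - P n (s, 0) with hωdef
    have hωker : P n ω = 0 := h.u_mem_ker hn s
    have e1 : Phi (triangular A11 A12 A22) m n ((s, 0) : H1 × H2)
        = Phi (triangular A11 A12 A22) m n (P n ((s, 0) : H1 × H2))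
          + Phi (triangular A11 A12 A22) m n ω := by
      rw [hωdef, map_sub]; abel
    have h2 : ‖Phi (triangular A11 A12 A22) m n (P n ((s, 0) : H1 × H2))‖
        ≤ K * Real.exp (-α * ((m:ℝ) - (n:ℝ))) * ‖s‖ := h.phi_stab_pair hnm hm s
    have h3 : ‖Phi (triangular A11 A12 A22) m n ω‖
        ≤ K * C * Real.exp (-α * ((m:ℝ) - (n:ℝ))) * ‖s‖ := by
      have hxm : P m (Phi (triangular A11 A12 A22) m n ω) = 0 :=
        h.ker_invariant hnm hm hωker
      have hy : Phi (triangular A11 A12 A22) 0 m (Phi (triangular A11 A12 A22) m n ω)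
          = Phi (triangular A11 A12 A22) 0 n ω := Phi_comp _ hnm hm ω
      have h4 := h.unst_apply hm hm le_rfl hxm
      rw [hy] at h4
      have h5 : ‖Phi (triangular A11 A12 A22) 0 n ω‖ ≤ C * Real.exp (α * (n:ℝ)) * ‖s‖ :=
        hCest n hn s (mem_Sstable.mp hs)
      have e : -α * ((((0:ℤ)):ℝ) - (m:ℝ)) = α * (m:ℝ) := by push_cast; ring
      rw [e] at h4
      calc ‖Phi (triangular A11 A12 A22) m n ω‖
          ≤ K * Real.exp (α * (m:ℝ)) * ‖Phi (triangular A11 A12 A22) 0 n ω‖ := h4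
        _ ≤ K * Real.exp (α * (m:ℝ)) * (C * Real.exp (α * (n:ℝ)) * ‖s‖) :=
            mul_le_mul_of_nonneg_left h5 (by positivity)
        _ = K * C * (Real.exp (α * (m:ℝ)) * Real.exp (α * (n:ℝ))) * ‖s‖ := by ring
        _ ≤ K * C * Real.exp (-α * ((m:ℝ) - (n:ℝ))) * ‖s‖ := by
            refine mul_le_mul_of_nonneg_right ?_ (norm_nonneg s)
            refine mul_le_mul_of_nonneg_left ?_ (by positivity)
            rw [← Real.exp_add, Real.exp_le_exp]
            have hm' : (m:ℝ) ≤ 0 := by exact_mod_cast hm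
            nlinarith [h.hα]
    calc ‖Phi A11 m n s‖ = ‖(Phi (triangular A11 A12 A22) m n ((s, 0) : H1 × H2)).1‖ := by
          rw [tri_phi_pair hnm]
      _ ≤ ‖Phi (triangular A11 A12 A22) m n ((s, 0) : H1 × H2)‖ := norm_fst_le _
      _ = ‖Phi (triangular A11 A12 A22) m n (P n ((s, 0) : H1 × H2))
            + Phi (triangular A11 A12 A22) m n ω‖ := by rw [e1]
      _ ≤ ‖Phi (triangular A11 A12 A22) m n (P n ((s, 0) : H1 × H2))‖
            + ‖Phi (triangular A11 A12 A22) m n ω‖ := norm_add_le _ _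
      _ ≤ K * Real.exp (-α * ((m:ℝ) - (n:ℝ))) * ‖s‖
            + K * C * Real.exp (-α * ((m:ℝ) - (n:ℝ))) * ‖s‖ := add_le_add h2 h3
      _ = (K + K * C) * Real.exp (-α * ((m:ℝ) - (n:ℝ))) * ‖s‖ := by ring
  -- assemble
  refine ⟨P1, max ((K + K * C) * (1 + Γ)) (K * Γ), α, ?_, h.hα, ?_, ?_, ?_, ?_, ?_⟩
  · have : (0:ℝ) < K * Γ := by positivity
    exact lt_max_of_lt_right this
  · -- projections
    intro n hn
    ext v
    have hn0 : n ≤ 0 := hn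
    exact hid n hn0 (P1 n v) (hS n hn0 v)
  · -- invariance
    intro n hn
    have hn1 : n ≤ -1 := hn
    have hn0 : n ≤ 0 := by omega
    have hn10 : n + 1 ≤ 0 := by omega
    ext v
    show A11 n (P1 n v) = P1 (n + 1) (A11 n v)
    have e1 : A11 n v = A11 n (P1 n v) + A11 n (v - P1 n v) := by
      rw [← map_add]; congr 1; abel
    rw [e1, map_add]
    have e2 : P1 (n + 1) (A11 n (P1 n v)) = A11 n (P1 n v) :=
      hid (n+1) hn10 _ (h.Sstable_step hn1 (hS n hn0 v))
    have e3 : P1 (n + 1) (A11 n (v - P1 n v)) = 0 :=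
      hZ (n+1) hn10 _ (Uset.step_mem (hU n hn0 v))
    rw [e2, e3, add_zero]
  · -- bijectivity on kernels
    intro n hn
    have hn1 : n ≤ -1 := hn
    have hn0 : n ≤ 0 := by omega
    have hn10 : n + 1 ≤ 0 := by omega
    have hset : {x : H1 | P1 n x = 0} = (U1 A11 n : Set H1) := by
      ext x; exact hker n hn0 x
    have hset1 : {x : H1 | P1 (n+1) x = 0} = (U1 A11 (n+1) : Set H1) := by
      ext x; exact hker (n+1) hn10 x
    rw [hset, hset1]
    refine ⟨fun x hx => Uset.step_mem hx, fun x hx y hy hxy => ?_, fun y hy => ?_⟩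
    · have hd : x - y ∈ U1 A11 n := U1_sub hx hy
      have hz : Phi A11 (n+1) n (x - y) = 0 := by
        rw [Phi_step, map_sub, hxy, sub_self]
      have := h.U1_phi_inj (by omega : n ≤ n + 1) hn10 hd hz
      exact sub_eq_zero.mp this
    · obtain ⟨x, hx, hphi⟩ := Uset.exists_past hy (by omega : n ≤ n + 1)
      rw [Phi_step] at hphi
      exact ⟨x, hx, hphi⟩
  · -- stable norm estimate
    intro m n hm hn hnm
    have hm0 : m ≤ 0 := hm
    have hn0 : n ≤ 0 := hn
    refine ContinuousLinearMap.opNorm_le_bound _ (by positivity) (fun v => ?_)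
    have h1 := hstab m n hm0 hnm (P1 n v) (hS n hn0 v)
    have h2 := hP1bd n hn0 v
    calc ‖((Phi A11 m n).comp (P1 n)) v‖ = ‖Phi A11 m n (P1 n v)‖ := rfl
      _ ≤ (K + K * C) * Real.exp (-α * ((m:ℝ) - (n:ℝ))) * ‖P1 n v‖ := h1
      _ ≤ (K + K * C) * Real.exp (-α * ((m:ℝ) - (n:ℝ))) * ((1 + Γ) * ‖v‖) :=
          mul_le_mul_of_nonneg_left h2 (by positivity)
      _ = ((K + K * C) * (1 + Γ)) * Real.exp (-α * ((m:ℝ) - (n:ℝ))) * ‖v‖ := by ring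
      _ ≤ max ((K + K * C) * (1 + Γ)) (K * Γ) * Real.exp (-α * ((m:ℝ) - (n:ℝ))) * ‖v‖ := by
          refine mul_le_mul_of_nonneg_right
            (mul_le_mul_of_nonneg_right (le_max_left _ _) (by positivity)) (norm_nonneg v)
  · -- unstable estimate
    intro m n hm hn hmn x y hx hxy
    have hm0 : m ≤ 0 := hm
    have hn0 : n ≤ 0 := hn
    have hxU : x ∈ U1 A11 m := (hker m hm0 x).mp hx
    have hyU : Phi A11 n m x ∈ U1 A11 n := Uset.phi_mem hxU hmn
    have hXker : P m ((x, 0) : H1 × H2) = 0 := h.mem_ker_of_Uset hm0 hxU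
    have hYker : P n ((Phi A11 n m x, 0) : H1 × H2) = 0 := h.mem_ker_of_Uset hn0 hyU
    have h1 := h.unst m n hm0 hn0 hmn ((x, 0) : H1 × H2) ((Phi A11 n m x, 0) : H1 × H2)
      hXker (by rw [tri_phi_pair hmn, hYker, sub_zero])
    rw [norm_pair, norm_pair] at h1
    have h2 : ‖Phi A11 n m x‖ ≤ Γ * ‖y‖ := by
      rw [hxy]
      have e : y - P1 n y = y - P1 n y := rfl
      have := hbd n hn0 y
      exact this
    calc ‖x‖ ≤ K * Real.exp (-α * ((n:ℝ) - (m:ℝ))) * ‖Phi A11 n m x‖ := h1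
      _ ≤ K * Real.exp (-α * ((n:ℝ) - (m:ℝ))) * (Γ * ‖y‖) :=
          mul_le_mul_of_nonneg_left h2 (by positivity)
      _ = (K * Γ) * Real.exp (-α * ((n:ℝ) - (m:ℝ))) * ‖y‖ := by ring
      _ ≤ max ((K + K * C) * (1 + Γ)) (K * Γ) * Real.exp (-α * ((n:ℝ) - (m:ℝ))) * ‖y‖ := by
          refine mul_le_mul_of_nonneg_right
            (mul_le_mul_of_nonneg_right (le_max_right _ _) (by positivity)) (norm_nonneg y)

/-- Transport of the rank of `U1` between times. -/
lemma rank_U1_eq {m m' : ℤ} (hmm : m ≤ m') (hm' : m' ≤ 0) :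
    Module.rank ℝ ↥(U1 A11 m) = Module.rank ℝ ↥(U1 A11 m') := by
  have hm : m ≤ 0 := hmm.trans hm'
  set f : ↥(U1 A11 m) →ₗ[ℝ] ↥(U1 A11 m') :=
    LinearMap.codRestrict (U1 A11 m')
      (((Phi A11 m' m).toLinearMap).comp (U1 A11 m).subtype)
      (fun v => Uset.phi_mem v.2 hmm) with hf
  have hinj : Function.Injective f := by
    intro v w hvw
    have h1 : Phi A11 m' m (v : H1) = Phi A11 m' m (w : H1) := by
      have := congrArg Subtype.val hvw
      exact this
    have h2 : Phi A11 m' m ((v : H1) - (w : H1)) = 0 := by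
      rw [map_sub, h1, sub_self]
    have h3 : (v : H1) - (w : H1) ∈ U1 A11 m := Submodule.sub_mem _ v.2 w.2
    have := h.U1_phi_inj hmm hm' h3 h2
    exact Subtype.ext (sub_eq_zero.mp this)
  have hsurj : Function.Surjective f := by
    intro w
    obtain ⟨x, hx, hphi⟩ := Uset.exists_past w.2 hmm
    refine ⟨⟨x, hx⟩, ?_⟩
    apply Subtype.ext
    show Phi A11 m' m x = (w : H1)
    exact hphi
  exact (LinearEquiv.ofBijective f ⟨hinj, hsurj⟩).rank_eq

end Dicho
end Hilbert
end BTD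

theorem block1_dichotomy_of_triangular_Zminus {H1 : Type u} {H2 : Type u}
    [NormedAddCommGroup H1] [InnerProductSpace ℝ H1] [CompleteSpace H1]
    [NormedAddCommGroup H2] [InnerProductSpace ℝ H2] [CompleteSpace H2]
    (A11 : ℤ → H1 →L[ℝ] H1) (A12 : ℤ → H2 →L[ℝ] H1) (A22 : ℤ → H2 →L[ℝ] H2)
    (P : ℤ → (H1 × H2) →L[ℝ] H1 × H2)
    (hP : IsExpDichotomy {n : ℤ | n ≤ 0} {n : ℤ | n ≤ -1} (triangular A11 A12 A22) P)
    (hfin : Module.rank ℝ (LinearMap.ker (P 0 : (H1 × H2) →ₗ[ℝ] H1 × H2)) < Cardinal.aleph0) :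
    ExpDichotomy {n : ℤ | n ≤ 0} {n : ℤ | n ≤ -1} A11 ∧
      (∀ m : ℤ, m ≤ 0 →
        Module.rank ℝ (Submodule.span ℝ (Uset A11 m)) ≤
          Module.rank ℝ (LinearMap.ker (P 0 : (H1 × H2) →ₗ[ℝ] H1 × H2))) ∧
      (∀ m m' : ℤ, m ≤ 0 → m' ≤ 0 →
        Module.rank ℝ (Submodule.span ℝ (Uset A11 m)) =
          Module.rank ℝ (Submodule.span ℝ (Uset A11 m'))) := by
  classical
  obtain ⟨K, α, hK, hα, h1, h2, h3, h4, h5⟩ := hP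
  have hd : BTD.Dicho (triangular A11 A12 A22) P (max K 1) α := by
    refine ⟨le_max_right _ _, hα, fun n hn => h1 n hn, fun n hn => h2 n hn,
      fun n hn => h3 n hn, fun m n hm hn hnm => ?_, fun m n hm hn hmn x y hx hxy => ?_⟩
    · exact (h4 m n hm hn hnm).trans
        (mul_le_mul_of_nonneg_right (le_max_left K 1) (Real.exp_pos _).le)
    · exact (h5 m n hm hn hmn x y hx hxy).trans
        (mul_le_mul_of_nonneg_right
          (mul_le_mul_of_nonneg_right (le_max_left K 1) (Real.exp_pos _).le)
          (norm_nonneg y))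
  haveI hfree : Module.Free ℝ ↥(LinearMap.ker (P 0 : (H1 × H2) →ₗ[ℝ] H1 × H2)) := Module.Free.of_divisionRing ℝ _
  haveI hfd : FiniteDimensional ℝ ↥(LinearMap.ker (P 0 : (H1 × H2) →ₗ[ℝ] H1 × H2)) :=
    Module.rank_lt_aleph0_iff.mp hfin
  refine ⟨hd.dichotomy_A11, fun m hm => ?_, fun m m' hm hm' => ?_⟩
  · rw [BTD.span_Uset]
    exact hd.rank_U1_le m hm
  · rw [BTD.span_Uset, BTD.span_Uset]
    rcases le_total m m' with hmm | hmm
    · exact hd.rank_U1_eq hmm hm'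
    · exact (hd.rank_U1_eq hmm hm).symm

end
end

section
/- Let J = Z−, assume A11(n) and A22(n) are invertible for all n ∈ Z−\{0}, and suppose the triangular system x(n+1) = (A11(n) A12(n); 0 A22(n)) x(n) admits an exponential dichotomy on Z− with projections P(n) such that dim ker P(0) < +∞. Then the diagonal system x(n+1) = diag(A11(n), A22(n)) x(n) admits an exponential dichotomy on Z−. -/
set_option synthInstance.maxHeartbeats 1000000
set_option maxHeartbeats 2000000


open Real ContinuousLinearMap

noncomputable section

universe u

variable {X : Type u} [NormedAddCommGroup X] [NormedSpace ℝ X]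

variable {X1 : Type u} {X2 : Type u} [NormedAddCommGroup X1] [NormedSpace ℝ X1]
  [NormedAddCommGroup X2] [NormedSpace ℝ X2]

lemma cocycleAux_add (A : ℤ → X →L[ℝ] X) (n : ℤ) (a b : ℕ) :
    cocycleAux A n (a + b) = (cocycleAux A (n + a) b).comp (cocycleAux A n a) := by
  induction b with
  | zero => simp [cocycleAux]
  | succ b ih =>
      show cocycleAux A n ((a + b) + 1) = _
      rw [show cocycleAux A n ((a+b)+1) = (A (n + (a+b))).comp (cocycleAux A n (a+b)) from rfl]
      rw [ih]
      rw [show cocycleAux A (n+a) (b+1) = (A ((n+a) + b)).comp (cocycleAux A (n+a) b) from rfl]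
      rw [← ContinuousLinearMap.comp_assoc]
      congr 2
      push_cast; ring

lemma Phi_self (A : ℤ → X →L[ℝ] X) (n : ℤ) : Phi A n n = ContinuousLinearMap.id ℝ X := by
  simp [Phi, cocycleAux]

lemma Phi_succ (A : ℤ → X →L[ℝ] X) (n : ℤ) : Phi A (n+1) n = A n := by
  have h : (n + 1 - n).toNat = 1 := by omega
  rw [Phi, h]
  show (A (n + (0:ℕ))).comp (cocycleAux A n 0) = A n
  simp [cocycleAux]

lemma Phi_comp (A : ℤ → X →L[ℝ] X) {m k n : ℤ} (h1 : n ≤ k) (h2 : k ≤ m) :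
    (Phi A m k).comp (Phi A k n) = Phi A m n := by
  unfold Phi
  have h3 : (m - n).toNat = (k - n).toNat + (m - k).toNat := by omega
  rw [h3, cocycleAux_add]
  congr 2
  omega

def natE (S : ℤ → X ≃L[ℝ] X) : ℕ → X ≃L[ℝ] X
  | 0 => ContinuousLinearEquiv.refl ℝ X
  | k + 1 => (S (-(k+1 : ℕ) : ℤ)).trans (natE S k)

def negE (S : ℤ → X ≃L[ℝ] X) (n : ℤ) : X ≃L[ℝ] X := natE S (-n).toNat

lemma coe_natE (S : ℤ → X ≃L[ℝ] X) (A : ℤ → X →L[ℝ] X)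
    (hS : ∀ n : ℤ, n ≤ -1 → (S n : X →L[ℝ] X) = A n) :
    ∀ k : ℕ, (natE S k : X →L[ℝ] X) = Phi A 0 (-(k : ℤ)) := by
  intro k; induction k with
  | zero => simp [natE, Phi, cocycleAux]
  | succ k ih =>
      have coeS : (S (-(k+1:ℕ) : ℤ) : X →L[ℝ] X) = A (-(k+1:ℕ) : ℤ) :=
        hS _ (by push_cast; omega)
      have h1 : (natE S (k+1) : X →L[ℝ] X)
          = (natE S k : X →L[ℝ] X).comp (S (-(k+1:ℕ) : ℤ) : X →L[ℝ] X) := by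
        rfl
      rw [h1, ih, coeS]
      have h2 := Phi_succ A (-(k+1:ℕ) : ℤ)
      rw [show (-(k+1:ℕ):ℤ) + 1 = -(k:ℤ) by push_cast; ring] at h2
      rw [← h2]
      exact Phi_comp A (by push_cast; omega) (by push_cast; omega)

lemma coe_negE (S : ℤ → X ≃L[ℝ] X) (A : ℤ → X →L[ℝ] X)
    (hS : ∀ n : ℤ, n ≤ -1 → (S n : X →L[ℝ] X) = A n) {n : ℤ} (hn : n ≤ 0) :
    (negE S n : X →L[ℝ] X) = Phi A 0 n := by
  have h := coe_natE S A hS (-n).toNat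
  rwa [show (-((-n).toNat : ℤ)) = n by omega] at h

lemma negE_bridge (S : ℤ → X ≃L[ℝ] X) (A : ℤ → X →L[ℝ] X)
    (hS : ∀ n : ℤ, n ≤ -1 → (S n : X →L[ℝ] X) = A n) {m n : ℤ}
    (h1 : n ≤ m) (h2 : m ≤ 0) (y : X) :
    Phi A m n y = (negE S m).symm (negE S n y) := by
  rw [eq_comm, ContinuousLinearEquiv.symm_apply_eq]
  have hn : n ≤ 0 := le_trans h1 h2
  have e1 : (negE S m) (Phi A m n y) = (negE S m : X →L[ℝ] X) (Phi A m n y) := rfl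
  have e2 : (negE S n) y = (negE S n : X →L[ℝ] X) y := rfl
  rw [e1, e2, coe_negE S A hS h2, coe_negE S A hS hn,
    ← ContinuousLinearMap.comp_apply, Phi_comp A h1 h2]

lemma negE_zero (S : ℤ → X ≃L[ℝ] X) (x : X) : negE S 0 x = x := by
  show natE S (-(0:ℤ)).toNat x = x
  norm_num [natE]


lemma negE_zero_symm (S : ℤ → X ≃L[ℝ] X) (x : X) : (negE S 0).symm x = x := by
  apply (negE S 0).injective
  rw [ContinuousLinearEquiv.apply_symm_apply, negE_zero]

lemma negE_step (S : ℤ → X ≃L[ℝ] X) {n : ℤ} (hn : n ≤ -1) (x : X) :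
    negE S n x = negE S (n+1) (S n x) := by
  have h1 : (-n).toNat = (-(n+1)).toNat + 1 := by omega
  show natE S (-n).toNat x = natE S (-(n+1)).toNat (S n x)
  rw [h1]
  show (natE S ((-(n+1)).toNat)) ((S (-(((-(n+1)).toNat : ℕ)+1:ℕ) : ℤ)) x) = _
  have h2 : (-(((-(n+1)).toNat : ℕ)+1:ℕ) : ℤ) = n := by push_cast; omega
  rw [h2]

section prodsys
variable {H1 : Type u} {H2 : Type u} [NormedAddCommGroup H1] [NormedSpace ℝ H1]
  [NormedAddCommGroup H2] [NormedSpace ℝ H2]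

lemma natE_fst (S : ℤ → (H1 × H2) ≃L[ℝ] H1 × H2) (S1 : ℤ → H1 ≃L[ℝ] H1)
    (h : ∀ n : ℤ, n ≤ -1 → ∀ v : H1, S n (v, 0) = (S1 n v, 0)) :
    ∀ (k : ℕ) (v : H1), natE S k (v, 0) = (natE S1 k v, 0) := by
  intro k; induction k with
  | zero => intro v; rfl
  | succ k ih =>
      intro v
      show natE S k ((S (-(k+1:ℕ) : ℤ)) (v, 0)) = (natE S1 k ((S1 (-(k+1:ℕ) : ℤ)) v), 0)
      rw [h _ (by push_cast; omega) v]
      exact ih _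

lemma natE_snd (S : ℤ → (H1 × H2) ≃L[ℝ] H1 × H2) (S2 : ℤ → H2 ≃L[ℝ] H2)
    (h : ∀ n : ℤ, n ≤ -1 → ∀ x : H1 × H2, (S n x).2 = S2 n x.2) :
    ∀ (k : ℕ) (x : H1 × H2), (natE S k x).2 = natE S2 k x.2 := by
  intro k; induction k with
  | zero => intro x; rfl
  | succ k ih =>
      intro x
      show (natE S k ((S (-(k+1:ℕ) : ℤ)) x)).2 = natE S2 k ((S2 (-(k+1:ℕ) : ℤ)) x.2)
      rw [ih _, h _ (by push_cast; omega) x]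

lemma natE_pair (S : ℤ → (H1 × H2) ≃L[ℝ] H1 × H2) (S1 : ℤ → H1 ≃L[ℝ] H1)
    (S2 : ℤ → H2 ≃L[ℝ] H2)
    (h : ∀ n : ℤ, n ≤ -1 → ∀ x : H1 × H2, S n x = (S1 n x.1, S2 n x.2)) :
    ∀ (k : ℕ) (x : H1 × H2), natE S k x = (natE S1 k x.1, natE S2 k x.2) := by
  intro k; induction k with
  | zero => intro x; rfl
  | succ k ih =>
      intro x
      show natE S k ((S (-(k+1:ℕ) : ℤ)) x) = _
      rw [h _ (by push_cast; omega) x, ih]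
      rfl

lemma negE_fst (S : ℤ → (H1 × H2) ≃L[ℝ] H1 × H2) (S1 : ℤ → H1 ≃L[ℝ] H1)
    (h : ∀ n : ℤ, n ≤ -1 → ∀ v : H1, S n (v, 0) = (S1 n v, 0)) (n : ℤ) (v : H1) :
    negE S n (v, 0) = (negE S1 n v, 0) :=
  natE_fst S S1 h _ v

lemma negE_fst_symm (S : ℤ → (H1 × H2) ≃L[ℝ] H1 × H2) (S1 : ℤ → H1 ≃L[ℝ] H1)
    (h : ∀ n : ℤ, n ≤ -1 → ∀ v : H1, S n (v, 0) = (S1 n v, 0)) (n : ℤ) (v : H1) :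
    (negE S n).symm (v, 0) = ((negE S1 n).symm v, 0) := by
  apply (negE S n).injective
  rw [ContinuousLinearEquiv.apply_symm_apply, negE_fst S S1 h n,
    ContinuousLinearEquiv.apply_symm_apply]

lemma negE_snd (S : ℤ → (H1 × H2) ≃L[ℝ] H1 × H2) (S2 : ℤ → H2 ≃L[ℝ] H2)
    (h : ∀ n : ℤ, n ≤ -1 → ∀ x : H1 × H2, (S n x).2 = S2 n x.2) (n : ℤ) (x : H1 × H2) :
    (negE S n x).2 = negE S2 n x.2 :=
  natE_snd S S2 h _ x

lemma negE_snd_symm (S : ℤ → (H1 × H2) ≃L[ℝ] H1 × H2) (S2 : ℤ → H2 ≃L[ℝ] H2)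
    (h : ∀ n : ℤ, n ≤ -1 → ∀ x : H1 × H2, (S n x).2 = S2 n x.2) (n : ℤ) (x : H1 × H2) :
    ((negE S n).symm x).2 = (negE S2 n).symm x.2 := by
  apply (negE S2 n).injective
  rw [← negE_snd S S2 h n, ContinuousLinearEquiv.apply_symm_apply,
    ContinuousLinearEquiv.apply_symm_apply]

lemma negE_pair (S : ℤ → (H1 × H2) ≃L[ℝ] H1 × H2) (S1 : ℤ → H1 ≃L[ℝ] H1)
    (S2 : ℤ → H2 ≃L[ℝ] H2)
    (h : ∀ n : ℤ, n ≤ -1 → ∀ x : H1 × H2, S n x = (S1 n x.1, S2 n x.2)) (n : ℤ)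
    (x : H1 × H2) :
    negE S n x = (negE S1 n x.1, negE S2 n x.2) :=
  natE_pair S S1 S2 h _ x

lemma negE_pair_symm (S : ℤ → (H1 × H2) ≃L[ℝ] H1 × H2) (S1 : ℤ → H1 ≃L[ℝ] H1)
    (S2 : ℤ → H2 ≃L[ℝ] H2)
    (h : ∀ n : ℤ, n ≤ -1 → ∀ x : H1 × H2, S n x = (S1 n x.1, S2 n x.2)) (n : ℤ)
    (x : H1 × H2) :
    (negE S n).symm x = ((negE S1 n).symm x.1, (negE S2 n).symm x.2) := by
  apply (negE S n).injective
  rw [ContinuousLinearEquiv.apply_symm_apply, negE_pair S S1 S2 h n]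
  show (_, _) = (_, _)
  rw [ContinuousLinearEquiv.apply_symm_apply, ContinuousLinearEquiv.apply_symm_apply]

/-- Triangular continuous linear equivalence. -/
def triEquiv (e1 : H1 ≃L[ℝ] H1) (B : H2 →L[ℝ] H1) (e2 : H2 ≃L[ℝ] H2) :
    (H1 × H2) ≃L[ℝ] H1 × H2 where
  toLinearEquiv :=
    { toFun := fun x => (e1 x.1 + B x.2, e2 x.2)
      map_add' := fun a b => by
        simp only [Prod.fst_add, Prod.snd_add, map_add, Prod.mk_add_mk]
        rw [Prod.mk.injEq]
        exact ⟨by abel, rfl⟩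
      map_smul' := fun c a => by
        simp [Prod.smul_mk, smul_add]
      invFun := fun x => (e1.symm (x.1 - B (e2.symm x.2)), e2.symm x.2)
      left_inv := fun x => by
        simp
      right_inv := fun x => by
        simp }
  continuous_toFun := by
    apply Continuous.prodMk
    · exact ((e1.continuous).comp continuous_fst).add ((B.continuous).comp continuous_snd)
    · exact (e2.continuous).comp continuous_snd
  continuous_invFun := by
    apply Continuous.prodMk
    · exact (e1.symm.continuous).comp (continuous_fst.sub
        ((B.continuous).comp ((e2.symm.continuous).comp continuous_snd)))
    · exact (e2.symm.continuous).comp continuous_snd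

@[simp] lemma triEquiv_apply (e1 : H1 ≃L[ℝ] H1) (B : H2 →L[ℝ] H1) (e2 : H2 ≃L[ℝ] H2)
    (x : H1 × H2) : triEquiv e1 B e2 x = (e1 x.1 + B x.2, e2 x.2) := rfl

end prodsys

section projsec
lemma exists_good_proj {H1 : Type u} {H2 : Type u}
    [NormedAddCommGroup H1] [InnerProductSpace ℝ H1] [CompleteSpace H1]
    [NormedAddCommGroup H2] [InnerProductSpace ℝ H2] [CompleteSpace H2]
    (P0 : (H1 × H2) →L[ℝ] H1 × H2) (hidem : ∀ x, P0 (P0 x) = P0 x)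
    (hfin : Module.rank ℝ (LinearMap.ker (P0 : (H1 × H2) →ₗ[ℝ] H1 × H2)) < Cardinal.aleph0) :
    ∃ P' : (H1 × H2) →L[ℝ] H1 × H2,
      (∀ x, P0 (x - P' x) = 0) ∧ (∀ x, P0 x = 0 → P' x = 0) ∧
      (∀ x, P' (P' x) = P' x) ∧ (∀ v : H1, (P' (v, 0)).2 = 0) := by
  classical
  set 𝒰 : Submodule ℝ (H1 × H2) := LinearMap.ker (P0 : (H1 × H2) →ₗ[ℝ] H1 × H2) with h𝒰
  haveI hfd : FiniteDimensional ℝ 𝒰 := Module.rank_lt_aleph0_iff.mp hfin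
  have hmem𝒰 : ∀ x : H1 × H2, x ∈ 𝒰 ↔ P0 x = 0 := fun x => LinearMap.mem_ker
  set U1 : Submodule ℝ H1 :=
    𝒰.comap (ContinuousLinearMap.inl ℝ H1 H2 : H1 →ₗ[ℝ] H1 × H2) with hU1
  set U2 : Submodule ℝ H2 :=
    𝒰.map (ContinuousLinearMap.snd ℝ H1 H2 : (H1 × H2) →ₗ[ℝ] H2) with hU2
  haveI : FiniteDimensional ℝ U2 := inferInstance
  have hU1closed : IsClosed (U1 : Set H1) := by
    have : (U1 : Set H1) = (ContinuousLinearMap.inl ℝ H1 H2) ⁻¹' (𝒰 : Set (H1 × H2)) := rfl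
    rw [this]
    exact IsClosed.preimage (ContinuousLinearMap.inl ℝ H1 H2).continuous (isClosed_ker P0)
  haveI : CompleteSpace U1 := hU1closed.completeSpace_coe
  -- the complementary subspace
  set 𝒮 : Submodule ℝ (H1 × H2) := (U1ᗮ).prod (U2ᗮ) with h𝒮
  have hScl : IsClosed (𝒮 : Set (H1 × H2)) := by
    have : (𝒮 : Set (H1 × H2)) = (U1ᗮ : Set H1) ×ˢ (U2ᗮ : Set H2) := rfl
    rw [this]
    exact (U1.isClosed_orthogonal).prod (U2.isClosed_orthogonal)
  have h𝒰cl : IsClosed (𝒰 : Set (H1 × H2)) := isClosed_ker P0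
  -- IsCompl
  have hdisj : ∀ x : H1 × H2, x ∈ 𝒮 → x ∈ 𝒰 → x = 0 := by
    intro x hxS hxU
    obtain ⟨hx1, hx2⟩ := Submodule.mem_prod.mp hxS
    have hx2' : x.2 ∈ U2 := Submodule.mem_map_of_mem hxU
    have h2 : x.2 = 0 := by
      have := (Submodule.mem_orthogonal U2 x.2).mp hx2 x.2 hx2'
      exact inner_self_eq_zero.mp this
    have hx1' : x.1 ∈ U1 := by
      have : ((x.1, 0) : H1 × H2) ∈ 𝒰 := by
        have : x = (x.1, 0) := by rw [← h2]
        rwa [this] at hxU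
      exact this
    have h1 : x.1 = 0 := by
      have := (Submodule.mem_orthogonal U1 x.1).mp hx1 x.1 hx1'
      exact inner_self_eq_zero.mp this
    exact Prod.ext h1 h2
  have hdecomp : ∀ x : H1 × H2, ∃ s ∈ 𝒮, ∃ u ∈ 𝒰, x = s + u := by
    intro x
    haveI : Submodule.HasOrthogonalProjection U2 := by
      haveI : CompleteSpace U2 := FiniteDimensional.complete ℝ U2
      infer_instance
    have h2 : x.2 ∈ U2 ⊔ U2ᗮ := by
      rw [Submodule.isCompl_orthogonal_of_hasOrthogonalProjection.sup_eq_top]; trivial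
    obtain ⟨u2, hu2, w2, hw2, hx2⟩ := Submodule.mem_sup.mp h2
    obtain ⟨u, hu𝒰, hu2eq⟩ := Submodule.mem_map.mp hu2
    -- x - u - (0, w2) lies in H1 × 0
    have h1 : (x.1 - u.1) ∈ U1 ⊔ U1ᗮ := by
      rw [Submodule.isCompl_orthogonal_of_hasOrthogonalProjection.sup_eq_top]; trivial
    obtain ⟨v1, hv1, z1, hz1, hx1⟩ := Submodule.mem_sup.mp h1
    refine ⟨(z1, w2), Submodule.mem_prod.mpr ⟨hz1, hw2⟩, u + (v1, 0), ?_, ?_⟩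
    · exact Submodule.add_mem 𝒰 hu𝒰 hv1
    · have hu2eq' : u.2 = u2 := hu2eq
      apply Prod.ext
      · show x.1 = z1 + (u.1 + v1)
        have h' : x.1 = v1 + z1 + u.1 := eq_add_of_sub_eq hx1.symm
        rw [h']; abel
      · show x.2 = w2 + (u.2 + 0)
        rw [add_zero, hu2eq', ← hx2]
        exact add_comm u2 w2
  -- continuous projection onto 𝒮 along 𝒰
  haveI : CompleteSpace 𝒮 := hScl.completeSpace_coe
  haveI : CompleteSpace 𝒰 := h𝒰cl.completeSpace_coe
  set f : (𝒮 × 𝒰) →L[ℝ] H1 × H2 := (𝒮.subtypeL).coprod (𝒰.subtypeL) with hf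
  have hfapp : ∀ p : 𝒮 × 𝒰, f p = (p.1 : H1 × H2) + (p.2 : H1 × H2) := by
    intro p; simp [hf]
  have hinjF : Function.Injective f := by
    intro p q hpq
    rw [hfapp, hfapp] at hpq
    have h : (p.1 : H1 × H2) - q.1 = (q.2 : H1 × H2) - p.2 := by
      rw [sub_eq_sub_iff_add_eq_add, hpq]
      exact add_comm _ _
    have hS' : ((p.1 : H1 × H2) - q.1) ∈ 𝒮 := Submodule.sub_mem 𝒮 p.1.2 q.1.2
    have hU' : ((p.1 : H1 × H2) - q.1) ∈ 𝒰 := by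
      rw [h]; exact Submodule.sub_mem 𝒰 q.2.2 p.2.2
    have h0 := hdisj _ hS' hU'
    have h1 : p.1 = q.1 := Subtype.ext (sub_eq_zero.mp h0)
    have h2 : p.2 = q.2 := by
      have : (q.2 : H1 × H2) - p.2 = 0 := by rw [← h]; exact h0
      exact (Subtype.ext (sub_eq_zero.mp this)).symm
    exact Prod.ext h1 h2
  have hinj : f.ker = ⊥ := LinearMap.ker_eq_bot_of_injective (f := (f : (𝒮 × 𝒰) →ₗ[ℝ] H1 × H2)) hinjF
  have hsurj : f.range = ⊤ := by
    rw [LinearMap.range_eq_top]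
    intro x
    obtain ⟨s, hs, u, hu, hx⟩ := hdecomp x
    exact ⟨(⟨s, hs⟩, ⟨u, hu⟩), by rw [ContinuousLinearMap.coe_coe, hfapp]; exact hx.symm⟩
  set e := ContinuousLinearEquiv.ofBijective f hinj hsurj with he
  have heapp : ∀ p : 𝒮 × 𝒰, e p = (p.1 : H1 × H2) + (p.2 : H1 × H2) := by
    intro p
    have h0 : e p = f p := by
      rw [he, ContinuousLinearEquiv.coeFn_ofBijective]
    rw [h0]; exact hfapp p
  set P' : (H1 × H2) →L[ℝ] H1 × H2 :=
    (𝒮.subtypeL).comp ((ContinuousLinearMap.fst ℝ 𝒮 𝒰).comp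
      (e.symm : (H1 × H2) →L[ℝ] 𝒮 × 𝒰)) with hP'
  have hP'app : ∀ x : H1 × H2, P' x = ((e.symm x).1 : H1 × H2) := by
    intro x; simp [hP']
  have hmemS : ∀ x, P' x ∈ 𝒮 := by intro x; rw [hP'app]; exact (e.symm x).1.2
  have hsub : ∀ x : H1 × H2, x - P' x ∈ 𝒰 := by
    intro x
    obtain ⟨p, hp⟩ : ∃ p, e.symm x = p := ⟨_, rfl⟩
    have hx2 : x = e p := by rw [← hp, e.apply_symm_apply]
    have hxx : x = (p.1 : H1 × H2) + (p.2 : H1 × H2) := by rw [hx2]; exact heapp p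
    have h2 : x - P' x = (p.2 : H1 × H2) := by
      rw [hP'app, hp, hxx]; abel
    rw [h2]; exact p.2.2
  have hSfix : ∀ s : H1 × H2, s ∈ 𝒮 → P' s = s := by
    intro s hs
    have : e.symm s = (⟨s, hs⟩, 0) := by
      rw [ContinuousLinearEquiv.symm_apply_eq, heapp]
      simp
    rw [hP'app, this]
  have hUkill : ∀ u : H1 × H2, u ∈ 𝒰 → P' u = 0 := by
    intro u hu
    have : e.symm u = (0, ⟨u, hu⟩) := by
      rw [ContinuousLinearEquiv.symm_apply_eq, heapp]
      simp
    rw [hP'app, this]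
    simp
  refine ⟨P', ?_, ?_, ?_, ?_⟩
  · intro x; exact (hmem𝒰 _).mp (hsub x)
  · intro x hx; exact hUkill x ((hmem𝒰 x).mpr hx)
  · intro x; exact hSfix _ (hmemS x)
  · intro v
    have hs := hmemS (v, 0)
    obtain ⟨-, hs2⟩ := Submodule.mem_prod.mp hs
    have hu := hsub ((v, 0) : H1 × H2)
    have hu2 : ((v,0) - P' (v,0)).2 ∈ U2 := Submodule.mem_map_of_mem hu
    have : ((v,0) - P' (v,0)).2 = -(P' (v,0)).2 := by
      show (0 : H2) - (P' (v,0)).2 = _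
      exact zero_sub _
    rw [this] at hu2
    have : (P' (v, 0)).2 ∈ U2 := by
      have := Submodule.neg_mem U2 hu2; rwa [neg_neg] at this
    have := (Submodule.mem_orthogonal U2 _).mp hs2 _ this
    exact inner_self_eq_zero.mp this


end projsec


lemma triangular_apply (A11 : ℤ → X1 →L[ℝ] X1) (A12 : ℤ → X2 →L[ℝ] X1)
    (A22 : ℤ → X2 →L[ℝ] X2) (n : ℤ) (x : X1 × X2) :
    triangular A11 A12 A22 n x = (A11 n x.1 + A12 n x.2, A22 n x.2) := rfl

lemma diagonal_apply (A11 : ℤ → X1 →L[ℝ] X1) (A22 : ℤ → X2 →L[ℝ] X2) (n : ℤ) (x : X1 × X2) :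
    diagonal A11 A22 n x = (A11 n x.1, A22 n x.2) := rfl

theorem aux_main {H1 : Type u} {H2 : Type u}
    [NormedAddCommGroup H1] [InnerProductSpace ℝ H1] [CompleteSpace H1]
    [NormedAddCommGroup H2] [InnerProductSpace ℝ H2] [CompleteSpace H2]
    (A11 : ℤ → H1 →L[ℝ] H1) (A12 : ℤ → H2 →L[ℝ] H1) (A22 : ℤ → H2 →L[ℝ] H2)
    (s1 : ℤ → H1 ≃L[ℝ] H1) (s2 : ℤ → H2 ≃L[ℝ] H2)
    (hs1 : ∀ n : ℤ, n ≤ -1 → ((s1 n : H1 →L[ℝ] H1) = A11 n))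
    (hs2 : ∀ n : ℤ, n ≤ -1 → ((s2 n : H2 →L[ℝ] H2) = A22 n))
    (P : ℤ → (H1 × H2) →L[ℝ] H1 × H2)
    (hP : IsExpDichotomy {n : ℤ | n ≤ 0} {n : ℤ | n ≤ -1} (triangular A11 A12 A22) P)
    (hfin : Module.rank ℝ (LinearMap.ker (P 0 : (H1 × H2) →ₗ[ℝ] H1 × H2)) < Cardinal.aleph0) :
    ExpDichotomy {n : ℤ | n ≤ 0} {n : ℤ | n ≤ -1} (diagonal A11 A22) := by
  classical
  obtain ⟨K, α, hK, hα, hidem, hcomm, hbij, hii, hiii⟩ := hP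
  set At := triangular A11 A12 A22 with hAtdef
  set Ad := diagonal A11 A22 with hAddef
  set st : ℤ → (H1 × H2) ≃L[ℝ] H1 × H2 := fun n => triEquiv (s1 n) (A12 n) (s2 n) with hstdef
  set sd : ℤ → (H1 × H2) ≃L[ℝ] H1 × H2 := fun n => (s1 n).prodCongr (s2 n) with hsddef
  -- coincidence of the equivalences with the systems on J'
  have hstcoe : ∀ n : ℤ, n ≤ -1 → ((st n : (H1 × H2) →L[ℝ] H1 × H2) = At n) := by
    intro n hn
    apply ContinuousLinearMap.ext
    intro x
    show st n x = At n x
    rw [hAtdef, triangular_apply]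
    show (s1 n x.1 + A12 n x.2, s2 n x.2) = _
    have h1 : s1 n x.1 = A11 n x.1 := by
      rw [← hs1 n hn]; rfl
    have h2 : s2 n x.2 = A22 n x.2 := by
      rw [← hs2 n hn]; rfl
    rw [h1, h2]
  have hsdcoe : ∀ n : ℤ, n ≤ -1 → ((sd n : (H1 × H2) →L[ℝ] H1 × H2) = Ad n) := by
    intro n hn
    apply ContinuousLinearMap.ext
    intro x
    show sd n x = Ad n x
    rw [hAddef, diagonal_apply]
    show (s1 n x.1, s2 n x.2) = _
    have h1 : s1 n x.1 = A11 n x.1 := by rw [← hs1 n hn]; rfl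
    have h2 : s2 n x.2 = A22 n x.2 := by rw [← hs2 n hn]; rfl
    rw [h1, h2]
  -- component identities for negE families
  have hfststep : ∀ n : ℤ, n ≤ -1 → ∀ v : H1, st n (v, 0) = (s1 n v, 0) := by
    intro n _ v
    show (s1 n v + A12 n 0, s2 n 0) = (s1 n v, 0)
    simp
  have hsndstep : ∀ n : ℤ, n ≤ -1 → ∀ x : H1 × H2, (st n x).2 = s2 n x.2 :=
    fun n _ x => rfl
  have hpairstep : ∀ n : ℤ, n ≤ -1 → ∀ x : H1 × H2, sd n x = (s1 n x.1, s2 n x.2) :=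
    fun n _ x => rfl
  have hfstE : ∀ (n : ℤ) (v : H1), negE st n (v, 0) = (negE s1 n v, 0) :=
    fun n v => negE_fst st s1 hfststep n v
  have hfstEs : ∀ (n : ℤ) (v : H1), (negE st n).symm (v, 0) = ((negE s1 n).symm v, 0) :=
    fun n v => negE_fst_symm st s1 hfststep n v
  have hsndE : ∀ (n : ℤ) (x : H1 × H2), (negE st n x).2 = negE s2 n x.2 :=
    fun n x => negE_snd st s2 hsndstep n x
  have hsndEs : ∀ (n : ℤ) (x : H1 × H2), ((negE st n).symm x).2 = (negE s2 n).symm x.2 :=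
    fun n x => negE_snd_symm st s2 hsndstep n x
  have hpairE : ∀ (n : ℤ) (x : H1 × H2), negE sd n x = (negE s1 n x.1, negE s2 n x.2) :=
    fun n x => negE_pair sd s1 s2 hpairstep n x
  have hpairEs : ∀ (n : ℤ) (x : H1 × H2),
      (negE sd n).symm x = ((negE s1 n).symm x.1, (negE s2 n).symm x.2) :=
    fun n x => negE_pair_symm sd s1 s2 hpairstep n x
  -- pointwise idempotency
  have hid : ∀ v : H1 × H2, P 0 (P 0 v) = P 0 v := by
    intro v
    have := ContinuousLinearMap.ext_iff.mp (hidem 0 (le_refl (0:ℤ))) v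
    rwa [ContinuousLinearMap.comp_apply] at this
  -- commutation transported to time 0
  have hPcommN : ∀ (k : ℕ) (x : H1 × H2),
      P 0 (natE st k x) = natE st k (P (-(k : ℤ)) x) := by
    intro k
    induction k with
    | zero =>
        intro x
        show P 0 x = P (-(0:ℕ) : ℤ) x
        norm_num
    | succ k ih =>
        intro x
        have hn : (-(k+1:ℕ) : ℤ) ≤ -1 := by push_cast; omega
        show P 0 (natE st k ((st (-(k+1:ℕ) : ℤ)) x))
          = natE st k ((st (-(k+1:ℕ) : ℤ)) (P (-(k+1:ℕ) : ℤ) x))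
        rw [ih]
        congr 1
        have hcoe : ∀ y, st (-(k+1:ℕ) : ℤ) y = At (-(k+1:ℕ) : ℤ) y := by
          intro y; rw [← hstcoe _ hn]; rfl
        have h := ContinuousLinearMap.ext_iff.mp (hcomm (-(k+1:ℕ) : ℤ) hn) x
        rw [ContinuousLinearMap.comp_apply, ContinuousLinearMap.comp_apply] at h
        rw [hcoe, hcoe]
        rw [show (-(k:ℕ) : ℤ) = (-(k+1:ℕ) : ℤ) + 1 by push_cast; ring]
        exact h.symm
  have hPcomm : ∀ n : ℤ, n ≤ 0 → ∀ x : H1 × H2,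
      P 0 (negE st n x) = negE st n (P n x) := by
    intro n hn x
    have h := hPcommN (-n).toNat x
    rw [show (-(((-n).toNat : ℕ)) : ℤ) = n by omega] at h
    exact h
  -- bridges
  have hbrt : ∀ {m n : ℤ}, n ≤ m → m ≤ 0 → ∀ y : H1 × H2,
      Phi At m n y = (negE st m).symm (negE st n y) :=
    fun {m n} h1 h2 y => negE_bridge st At hstcoe h1 h2 y
  have hbrd : ∀ {m n : ℤ}, n ≤ m → m ≤ 0 → ∀ y : H1 × H2,
      Phi Ad m n y = (negE sd m).symm (negE sd n y) :=
    fun {m n} h1 h2 y => negE_bridge sd Ad hsdcoe h1 h2 y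
  -- hypothesis estimates in equivalence form
  have ha : ∀ m n : ℤ, n ≤ m → m ≤ 0 → ∀ x : H1 × H2,
      ‖(negE st m).symm (P 0 (negE st n x))‖
        ≤ K * Real.exp (-α * ((m : ℝ) - (n : ℝ))) * ‖x‖ := by
    intro m n h1 h2 x
    have hn0 : n ≤ 0 := h1.trans h2
    rw [hPcomm n hn0 x, ← hbrt h1 h2 (P n x)]
    have hbnd := hii m n h2 hn0 h1
    calc ‖Phi At m n (P n x)‖ = ‖((Phi At m n).comp (P n)) x‖ := by
          rw [ContinuousLinearMap.comp_apply]
      _ ≤ ‖(Phi At m n).comp (P n)‖ * ‖x‖ := ContinuousLinearMap.le_opNorm _ x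
      _ ≤ K * Real.exp (-α * ((m : ℝ) - (n : ℝ))) * ‖x‖ :=
          mul_le_mul_of_nonneg_right hbnd (norm_nonneg x)
  have hb : ∀ m n : ℤ, m ≤ n → n ≤ 0 → ∀ y : H1 × H2,
      ‖(negE st m).symm (negE st n y - P 0 (negE st n y))‖
        ≤ K * Real.exp (-α * ((n : ℝ) - (m : ℝ))) * ‖y‖ := by
    intro m n h1 h2 y
    have hm0 : m ≤ 0 := h1.trans h2
    set x := (negE st m).symm (negE st n y - P 0 (negE st n y)) with hxdef
    have h4 : negE st m x = negE st n y - P 0 (negE st n y) := by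
      rw [hxdef, ContinuousLinearEquiv.apply_symm_apply]
    have hPm : P m x = 0 := by
      have h3 : negE st m (P m x) = P 0 (negE st m x) := (hPcomm m hm0 x).symm
      rw [h4] at h3
      have h5 : P 0 (negE st n y - P 0 (negE st n y)) = 0 := by
        rw [map_sub, hid, sub_self]
      rw [h5] at h3
      apply (negE st m).injective
      rw [h3, map_zero]
    have hPhi : Phi At n m x = y - P n y := by
      rw [hbrt h1 h2 x, h4, map_sub, ContinuousLinearEquiv.symm_apply_apply]
      congr 1
      rw [hPcomm n h2 y, ContinuousLinearEquiv.symm_apply_apply]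
    exact hiii m n hm0 h2 h1 x y hPm hPhi
  -- the adapted projection
  obtain ⟨P', c1, c2, c3, c4⟩ := exists_good_proj (P 0) hid hfin
  set CP : ℝ := 1 + ‖P'‖ with hCPdef
  have hCP : (1:ℝ) ≤ CP := by
    rw [hCPdef]; linarith [norm_nonneg P']
  have hCP0 : (0:ℝ) < CP := lt_of_lt_of_le one_pos hCP
  have hzb : ∀ w : H1 × H2, ‖w - P' w‖ ≤ CP * ‖w‖ := by
    intro w
    calc ‖w - P' w‖ ≤ ‖w‖ + ‖P' w‖ := norm_sub_le _ _
      _ ≤ ‖w‖ + ‖P'‖ * ‖w‖ := by linarith [P'.le_opNorm w]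
      _ = CP * ‖w‖ := by rw [hCPdef]; ring
  set K1 : ℝ := K + K * K * CP with hK1def
  have hK1 : 0 < K1 := by
    rw [hK1def]
    have : 0 < K * K * CP := by positivity
    linarith
  have hexp : ∀ a b : ℝ, a ≤ 0 →
      Real.exp (α * a) * Real.exp (α * b) ≤ Real.exp (-α * (a - b)) := by
    intro a b haneg
    rw [← Real.exp_add]
    apply Real.exp_le_exp.mpr
    nlinarith [mul_nonneg hα.le (neg_nonneg.mpr haneg)]
  -- auxiliary bounds
  have hwbound : ∀ n : ℤ, n ≤ 0 → ∀ x : H1 × H2,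
      ‖P 0 (negE st n x)‖ ≤ K * Real.exp (α * (n : ℝ)) * ‖x‖ := by
    intro n hn x
    have h := ha 0 n hn (le_refl 0) x
    rw [negE_zero_symm] at h
    have harg : -α * (((0:ℤ) : ℝ) - (n : ℝ)) = α * (n : ℝ) := by push_cast; ring
    rwa [harg] at h
  have hzbound : ∀ m : ℤ, m ≤ 0 → ∀ u : H1 × H2,
      ‖(negE st m).symm (P 0 u - P' (P 0 u))‖
        ≤ K * Real.exp (α * (m : ℝ)) * (CP * ‖P 0 u‖) := by
    intro m hm u
    set z := P 0 u - P' (P 0 u) with hzdef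
    have hz0 : P 0 z = 0 := c1 (P 0 u)
    have h := hb m 0 hm (le_refl 0) z
    rw [negE_zero st z, hz0, sub_zero] at h
    have harg : -α * (((0:ℤ) : ℝ) - (m : ℝ)) = α * (m : ℝ) := by push_cast; ring
    rw [harg] at h
    calc ‖(negE st m).symm z‖ ≤ K * Real.exp (α * (m : ℝ)) * ‖z‖ := h
      _ ≤ K * Real.exp (α * (m : ℝ)) * (CP * ‖P 0 u‖) := by
          have := hzb (P 0 u)
          gcongr
  have hP'split : ∀ u : H1 × H2, P' u = P 0 u - (P 0 u - P' (P 0 u)) := by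
    intro u
    have h6 : P 0 (u - P 0 u) = 0 := by rw [map_sub, hid, sub_self]
    have h7 := c2 _ h6
    rw [map_sub] at h7
    have h8 : P' u = P' (P 0 u) := sub_eq_zero.mp h7
    rw [h8]; abel
  -- Lemma 1: the two main estimates for P'
  have ha' : ∀ m n : ℤ, n ≤ m → m ≤ 0 → ∀ x : H1 × H2,
      ‖(negE st m).symm (P' (negE st n x))‖
        ≤ K1 * Real.exp (-α * ((m : ℝ) - (n : ℝ))) * ‖x‖ := by
    intro m n h1 h2 x
    have hn0 : n ≤ 0 := h1.trans h2
    set u := negE st n x with hudef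
    have t1 := ha m n h1 h2 x
    have t2 : ‖(negE st m).symm (P 0 u - P' (P 0 u))‖
        ≤ K * Real.exp (α * (m : ℝ)) * (CP * (K * Real.exp (α * (n : ℝ)) * ‖x‖)) := by
      refine le_trans (hzbound m h2 u) ?_
      have h5 := hwbound n hn0 x
      gcongr
    have hE : Real.exp (α * (m:ℝ)) * Real.exp (α * (n:ℝ))
        ≤ Real.exp (-α * ((m:ℝ) - (n:ℝ))) := by
      apply hexp
      exact_mod_cast h2
    calc ‖(negE st m).symm (P' u)‖
        = ‖(negE st m).symm (P 0 u) - (negE st m).symm (P 0 u - P' (P 0 u))‖ := by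
          rw [← map_sub]
          congr 1
          exact congrArg _ (hP'split u)
      _ ≤ ‖(negE st m).symm (P 0 u)‖ + ‖(negE st m).symm (P 0 u - P' (P 0 u))‖ :=
          norm_sub_le _ _
      _ ≤ K * Real.exp (-α * ((m:ℝ) - (n:ℝ))) * ‖x‖
            + K * Real.exp (α * (m : ℝ)) * (CP * (K * Real.exp (α * (n : ℝ)) * ‖x‖)) :=
          add_le_add t1 t2
      _ ≤ K1 * Real.exp (-α * ((m:ℝ) - (n:ℝ))) * ‖x‖ := by
          rw [hK1def]
          nlinarith [mul_le_mul_of_nonneg_left hE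
            (by positivity : (0:ℝ) ≤ K * K * CP * ‖x‖)]
  have hb' : ∀ m n : ℤ, m ≤ n → n ≤ 0 → ∀ x : H1 × H2,
      ‖(negE st m).symm ((negE st n x) - P' (negE st n x))‖
        ≤ K1 * Real.exp (-α * ((n : ℝ) - (m : ℝ))) * ‖x‖ := by
    intro m n h1 h2 x
    have hm0 : m ≤ 0 := h1.trans h2
    set u := negE st n x with hudef
    have t1 := hb m n h1 h2 x
    have t2 : ‖(negE st m).symm (P 0 u - P' (P 0 u))‖
        ≤ K * Real.exp (α * (m : ℝ)) * (CP * (K * Real.exp (α * (n : ℝ)) * ‖x‖)) := by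
      refine le_trans (hzbound m hm0 u) ?_
      have h5 := hwbound n h2 x
      gcongr
    have hE : Real.exp (α * (n:ℝ)) * Real.exp (α * (m:ℝ))
        ≤ Real.exp (-α * ((n:ℝ) - (m:ℝ))) := by
      apply hexp
      exact_mod_cast h2
    calc ‖(negE st m).symm (u - P' u)‖
        = ‖(negE st m).symm (u - P 0 u) + (negE st m).symm (P 0 u - P' (P 0 u))‖ := by
          rw [← map_add]
          congr 1
          rw [hP'split u]
          abel
      _ ≤ ‖(negE st m).symm (u - P 0 u)‖ + ‖(negE st m).symm (P 0 u - P' (P 0 u))‖ :=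
          norm_add_le _ _
      _ ≤ K * Real.exp (-α * ((n:ℝ) - (m:ℝ))) * ‖x‖
            + K * Real.exp (α * (m : ℝ)) * (CP * (K * Real.exp (α * (n : ℝ)) * ‖x‖)) :=
          add_le_add t1 t2
      _ ≤ K1 * Real.exp (-α * ((n:ℝ) - (m:ℝ))) * ‖x‖ := by
          rw [hK1def]
          nlinarith [mul_le_mul_of_nonneg_left hE
            (by positivity : (0:ℝ) ≤ K * K * CP * ‖x‖)]
  -- block projections
  set q1 : H1 →L[ℝ] H1 := (fst ℝ H1 H2).comp (P'.comp (inl ℝ H1 H2)) with hq1def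
  set q2 : H2 →L[ℝ] H2 := (snd ℝ H1 H2).comp (P'.comp (inr ℝ H1 H2)) with hq2def
  have hq1app : ∀ v : H1, q1 v = (P' (v, 0)).1 := by
    intro v; rw [hq1def]; rfl
  have hq2app : ∀ w : H2, q2 w = (P' (0, w)).2 := by
    intro w; rw [hq2def]; rfl
  have hq1P : ∀ v : H1, P' (v, 0) = (q1 v, 0) := by
    intro v
    rw [hq1app]
    exact Prod.ext rfl (c4 v)
  have hq2P : ∀ x : H1 × H2, (P' x).2 = q2 x.2 := by
    intro x
    have hx : ((x.1, (0:H2)) : H1 × H2) + ((0:H1), x.2) = x := by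
      apply Prod.ext <;> simp
    calc (P' x).2 = (P' ((x.1, (0:H2)) + ((0:H1), x.2))).2 := by rw [hx]
      _ = (P' (x.1, 0)).2 + (P' (0, x.2)).2 := by rw [map_add]; rfl
      _ = 0 + (P' (0, x.2)).2 := by rw [c4]
      _ = q2 x.2 := by rw [zero_add, hq2app]
  have hq1idem : ∀ v : H1, q1 (q1 v) = q1 v := by
    intro v
    rw [hq1app, ← hq1P, c3, ← hq1app]
  have hq2idem : ∀ w : H2, q2 (q2 w) = q2 w := by
    intro w
    have h1 : (((0:H1), q2 w) : H1 × H2) = P' (0, w) - ((P' ((0:H1), w)).1, (0:H2)) := by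
      apply Prod.ext
      · show (0:H1) = (P' ((0:H1), w)).1 - (P' ((0:H1), w)).1
        rw [sub_self]
      · show q2 w = (P' ((0:H1), w)).2 - 0
        rw [sub_zero, hq2app]
    calc q2 (q2 w) = (P' ((0:H1), q2 w)).2 := hq2app _
      _ = (P' (P' ((0:H1), w)) - P' ((P' ((0:H1), w)).1, (0:H2))).2 := by
          rw [h1, map_sub]
      _ = (P' ((0:H1), w)).2 - (P' ((P' ((0:H1), w)).1, (0:H2))).2 := by
          rw [c3]; rfl
      _ = (P' ((0:H1), w)).2 - 0 := by rw [c4]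
      _ = q2 w := by rw [sub_zero, hq2app]
  -- norms on products
  have hnorm1 : ∀ v : H1, ‖((v, (0:H2)) : H1 × H2)‖ = ‖v‖ := by
    intro v
    rw [Prod.norm_def]
    simp
  have hnorm2 : ∀ w : H2, ‖(((0:H1), w) : H1 × H2)‖ = ‖w‖ := by
    intro w
    rw [Prod.norm_def]
    simp
  -- subsystem estimates
  have ha1 : ∀ m n : ℤ, n ≤ m → m ≤ 0 → ∀ v : H1,
      ‖(negE s1 m).symm (q1 (negE s1 n v))‖
        ≤ K1 * Real.exp (-α * ((m:ℝ) - (n:ℝ))) * ‖v‖ := by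
    intro m n h1 h2 v
    have key : (((negE s1 m).symm (q1 (negE s1 n v)), (0:H2)) : H1 × H2)
        = (negE st m).symm (P' (negE st n (v, 0))) := by
      rw [hfstE n v, hq1P, hfstEs]
    have h := ha' m n h1 h2 ((v, (0:H2)) : H1 × H2)
    rw [← key, hnorm1, hnorm1] at h
    exact h
  have hb1 : ∀ m n : ℤ, m ≤ n → n ≤ 0 → ∀ v : H1,
      ‖(negE s1 m).symm (negE s1 n v - q1 (negE s1 n v))‖
        ≤ K1 * Real.exp (-α * ((n:ℝ) - (m:ℝ))) * ‖v‖ := by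
    intro m n h1 h2 v
    have key : (((negE s1 m).symm (negE s1 n v - q1 (negE s1 n v)), (0:H2)) : H1 × H2)
        = (negE st m).symm ((negE st n (v, 0)) - P' (negE st n (v, 0))) := by
      rw [hfstE n v, hq1P]
      rw [show ((negE s1 n v, (0:H2)) : H1 × H2) - (q1 (negE s1 n v), (0:H2))
        = ((negE s1 n v - q1 (negE s1 n v), (0:H2) - (0:H2)) : H1 × H2) from
          Prod.mk_sub_mk _ _ _ _, sub_zero]
      rw [hfstEs]
    have h := hb' m n h1 h2 ((v, (0:H2)) : H1 × H2)
    rw [← key, hnorm1, hnorm1] at h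
    exact h
  have ha2 : ∀ m n : ℤ, n ≤ m → m ≤ 0 → ∀ w : H2,
      ‖(negE s2 m).symm (q2 (negE s2 n w))‖
        ≤ K1 * Real.exp (-α * ((m:ℝ) - (n:ℝ))) * ‖w‖ := by
    intro m n h1 h2 w
    have h0 : q2 (negE s2 n w) = (P' (negE st n (0, w))).2 := by
      rw [hq2P, hsndE]
    have key : (negE s2 m).symm (q2 (negE s2 n w))
        = ((negE st m).symm (P' (negE st n ((0:H1), w)))).2 := by
      rw [hsndEs, ← h0]
    rw [key]
    calc ‖((negE st m).symm (P' (negE st n ((0:H1), w)))).2‖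
        ≤ ‖(negE st m).symm (P' (negE st n ((0:H1), w)))‖ := norm_snd_le _
      _ ≤ K1 * Real.exp (-α * ((m:ℝ) - (n:ℝ))) * ‖(((0:H1), w) : H1 × H2)‖ :=
          ha' m n h1 h2 _
      _ = K1 * Real.exp (-α * ((m:ℝ) - (n:ℝ))) * ‖w‖ := by rw [hnorm2]
  have hb2 : ∀ m n : ℤ, m ≤ n → n ≤ 0 → ∀ w : H2,
      ‖(negE s2 m).symm (negE s2 n w - q2 (negE s2 n w))‖
        ≤ K1 * Real.exp (-α * ((n:ℝ) - (m:ℝ))) * ‖w‖ := by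
    intro m n h1 h2 w
    have h0 : negE s2 n w - q2 (negE s2 n w)
        = ((negE st n ((0:H1), w)) - P' (negE st n ((0:H1), w))).2 := by
      have e1 : ((negE st n ((0:H1), w)) - P' (negE st n ((0:H1), w))).2
          = (negE st n ((0:H1), w)).2 - (P' (negE st n ((0:H1), w))).2 := rfl
      rw [e1, hsndE, hq2P, hsndE]
    have key : (negE s2 m).symm (negE s2 n w - q2 (negE s2 n w))
        = ((negE st m).symm ((negE st n ((0:H1), w)) - P' (negE st n ((0:H1), w)))).2 := by
      rw [hsndEs, ← h0]
    rw [key]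
    calc ‖((negE st m).symm ((negE st n ((0:H1), w)) - P' (negE st n ((0:H1), w)))).2‖
        ≤ ‖(negE st m).symm ((negE st n ((0:H1), w)) - P' (negE st n ((0:H1), w)))‖ :=
          norm_snd_le _
      _ ≤ K1 * Real.exp (-α * ((n:ℝ) - (m:ℝ))) * ‖(((0:H1), w) : H1 × H2)‖ :=
          hb' m n h1 h2 _
      _ = K1 * Real.exp (-α * ((n:ℝ) - (m:ℝ))) * ‖w‖ := by rw [hnorm2]
  -- the dichotomy projections for the diagonal system
  set Q : ℤ → (H1 × H2) →L[ℝ] H1 × H2 := fun n =>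
    (((negE sd n).symm : (H1 × H2) ≃L[ℝ] H1 × H2) : (H1 × H2) →L[ℝ] H1 × H2).comp
      ((q1.prodMap q2).comp
        (((negE sd n) : (H1 × H2) ≃L[ℝ] H1 × H2) : (H1 × H2) →L[ℝ] H1 × H2)) with hQdef
  have hQapp : ∀ (n : ℤ) (x : H1 × H2),
      Q n x = (negE sd n).symm ((q1.prodMap q2) (negE sd n x)) := by
    intro n x
    rw [hQdef]
    rfl
  have hQinv : ∀ (n : ℤ) (x : H1 × H2),
      negE sd n (Q n x) = (q1.prodMap q2) (negE sd n x) := by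
    intro n x
    rw [hQapp, ContinuousLinearEquiv.apply_symm_apply]
  have hQcomp : ∀ (n : ℤ) (x : H1 × H2),
      Q n x = ((negE s1 n).symm (q1 (negE s1 n x.1)),
               (negE s2 n).symm (q2 (negE s2 n x.2))) := by
    intro n x
    rw [hQapp, hpairE n x]
    rw [show (q1.prodMap q2) ((negE s1 n x.1, negE s2 n x.2) : H1 × H2)
      = ((q1 (negE s1 n x.1), q2 (negE s2 n x.2)) : H1 × H2) from rfl]
    rw [hpairEs]
  -- step relations for the diagonal system
  have hsdco : ∀ n : ℤ, n ≤ -1 → ∀ y : H1 × H2, sd n y = Ad n y := by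
    intro n hn y
    rw [← hsdcoe n hn]; rfl
  have hstep : ∀ n : ℤ, n ≤ -1 → ∀ y : H1 × H2,
      negE sd n y = negE sd (n+1) (Ad n y) := by
    intro n hn y
    rw [negE_step sd hn, hsdco n hn]
  have hcommQ : ∀ n : ℤ, n ≤ -1 → ∀ x : H1 × H2,
      Ad n (Q n x) = Q (n+1) (Ad n x) := by
    intro n hn x
    apply (negE sd (n+1)).injective
    rw [← hstep n hn (Q n x), hQinv n x]
    rw [hQapp (n+1), ContinuousLinearEquiv.apply_symm_apply, ← hstep n hn x]
  -- conclusion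
  refine ⟨Q, K1, α, hK1, hα, ?_, ?_, ?_, ?_, ?_⟩
  · -- idempotency
    intro n _
    apply ContinuousLinearMap.ext
    intro x
    rw [ContinuousLinearMap.comp_apply]
    rw [hQcomp n x, hQcomp n]
    show ((negE s1 n).symm (q1 (negE s1 n ((negE s1 n).symm (q1 (negE s1 n x.1))))),
          (negE s2 n).symm (q2 (negE s2 n ((negE s2 n).symm (q2 (negE s2 n x.2)))))) = _
    rw [ContinuousLinearEquiv.apply_symm_apply, ContinuousLinearEquiv.apply_symm_apply,
      hq1idem, hq2idem]
  · -- commutation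
    intro n hn
    apply ContinuousLinearMap.ext
    intro x
    rw [ContinuousLinearMap.comp_apply, ContinuousLinearMap.comp_apply]
    exact hcommQ n hn x
  · -- bijectivity on kernels
    intro n hn
    refine ⟨?_, ?_, ?_⟩
    · intro x hx
      show Q (n+1) (Ad n x) = 0
      rw [← hcommQ n hn x]
      have hx0 : Q n x = 0 := hx
      rw [hx0, map_zero]
    · intro a _ b _ hab
      have h1 : sd n a = sd n b := by
        rw [hsdco n hn a, hsdco n hn b]; exact hab
      exact (sd n).injective h1
    · intro z hz
      have hz0 : Q (n+1) z = 0 := hz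
      refine ⟨(sd n).symm z, ?_, ?_⟩
      · show Q n ((sd n).symm z) = 0
        have h1 : negE sd n ((sd n).symm z) = negE sd (n+1) z := by
          rw [negE_step sd hn, ContinuousLinearEquiv.apply_symm_apply]
        have h2 : (q1.prodMap q2) (negE sd (n+1) z) = 0 := by
          rw [hQapp] at hz0
          rw [show (0 : H1 × H2) = (negE sd (n+1)).symm 0 from (map_zero _).symm] at hz0
          exact (negE sd (n+1)).symm.injective hz0
        rw [hQapp, h1, h2, map_zero]
      · show Ad n ((sd n).symm z) = z
        rw [← hsdco n hn, ContinuousLinearEquiv.apply_symm_apply]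
  · -- forward estimate
    intro m n hm hn hnm
    have hm0 : m ≤ 0 := hm
    apply ContinuousLinearMap.opNorm_le_bound
    · positivity
    intro x
    rw [ContinuousLinearMap.comp_apply]
    rw [show Phi Ad m n (Q n x) = (negE sd m).symm (negE sd n (Q n x)) from
      hbrd hnm hm0 (Q n x)]
    rw [hQinv n x, hpairE n x]
    rw [show (q1.prodMap q2) ((negE s1 n x.1, negE s2 n x.2) : H1 × H2)
      = ((q1 (negE s1 n x.1), q2 (negE s2 n x.2)) : H1 × H2) from rfl]
    rw [hpairEs]
    rw [Prod.norm_def]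
    apply max_le
    · calc ‖(negE s1 m).symm (q1 (negE s1 n x.1))‖
          ≤ K1 * Real.exp (-α * ((m:ℝ) - (n:ℝ))) * ‖x.1‖ := ha1 m n hnm hm0 x.1
        _ ≤ K1 * Real.exp (-α * ((m:ℝ) - (n:ℝ))) * ‖x‖ := by
            have := norm_fst_le x
            gcongr
    · calc ‖(negE s2 m).symm (q2 (negE s2 n x.2))‖
          ≤ K1 * Real.exp (-α * ((m:ℝ) - (n:ℝ))) * ‖x.2‖ := ha2 m n hnm hm0 x.2
        _ ≤ K1 * Real.exp (-α * ((m:ℝ) - (n:ℝ))) * ‖x‖ := by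
            have := norm_snd_le x
            gcongr
  · -- backward estimate
    intro m n hm hn hmn x y _ heq
    have hn0 : n ≤ 0 := hn
    rw [show Phi Ad n m x = (negE sd n).symm (negE sd m x) from hbrd hmn hn0 x] at heq
    have h1 : negE sd m x = negE sd n y - (q1.prodMap q2) (negE sd n y) := by
      have h2 := congrArg (negE sd n) heq
      rw [ContinuousLinearEquiv.apply_symm_apply] at h2
      rw [h2, map_sub, hQinv]
    have h3 : x = (negE sd m).symm (negE sd n y - (q1.prodMap q2) (negE sd n y)) := by
      rw [← h1, ContinuousLinearEquiv.symm_apply_apply]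
    rw [h3, hpairE n y]
    rw [show (q1.prodMap q2) ((negE s1 n y.1, negE s2 n y.2) : H1 × H2)
      = ((q1 (negE s1 n y.1), q2 (negE s2 n y.2)) : H1 × H2) from rfl,
      Prod.mk_sub_mk]
    rw [hpairEs]
    rw [Prod.norm_def]
    apply max_le
    · calc ‖(negE s1 m).symm (negE s1 n y.1 - q1 (negE s1 n y.1))‖
          ≤ K1 * Real.exp (-α * ((n:ℝ) - (m:ℝ))) * ‖y.1‖ := hb1 m n hmn hn0 y.1
        _ ≤ K1 * Real.exp (-α * ((n:ℝ) - (m:ℝ))) * ‖y‖ := by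
            have := norm_fst_le y
            gcongr
    · calc ‖(negE s2 m).symm (negE s2 n y.2 - q2 (negE s2 n y.2))‖
          ≤ K1 * Real.exp (-α * ((n:ℝ) - (m:ℝ))) * ‖y.2‖ := hb2 m n hmn hn0 y.2
        _ ≤ K1 * Real.exp (-α * ((n:ℝ) - (m:ℝ))) * ‖y‖ := by
            have := norm_snd_le y
            gcongr

theorem diagonal_dichotomy_of_triangular_invertible_finiteCodim_Zminus {H1 : Type u} {H2 : Type u}
    [NormedAddCommGroup H1] [InnerProductSpace ℝ H1] [CompleteSpace H1]
    [NormedAddCommGroup H2] [InnerProductSpace ℝ H2] [CompleteSpace H2]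
    (A11 : ℤ → H1 →L[ℝ] H1) (A12 : ℤ → H2 →L[ℝ] H1) (A22 : ℤ → H2 →L[ℝ] H2)
    (hinv : ∀ n : ℤ, n ≤ -1 → IsUnit (A11 n) ∧ IsUnit (A22 n))
    (P : ℤ → (H1 × H2) →L[ℝ] H1 × H2)
    (hP : IsExpDichotomy {n : ℤ | n ≤ 0} {n : ℤ | n ≤ -1} (triangular A11 A12 A22) P)
    (hfin : Module.rank ℝ (LinearMap.ker (P 0 : (H1 × H2) →ₗ[ℝ] H1 × H2)) < Cardinal.aleph0) :
    ExpDichotomy {n : ℤ | n ≤ 0} {n : ℤ | n ≤ -1} (diagonal A11 A22) := by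
  refine aux_main A11 A12 A22
    (fun n => if h : n ≤ -1 then
        (ContinuousLinearEquiv.unitsEquiv ℝ H1) ((hinv n h).1.unit)
      else ContinuousLinearEquiv.refl ℝ H1)
    (fun n => if h : n ≤ -1 then
        (ContinuousLinearEquiv.unitsEquiv ℝ H2) ((hinv n h).2.unit)
      else ContinuousLinearEquiv.refl ℝ H2)
    ?_ ?_ P hP hfin
  · intro n hn
    simp only [dif_pos hn]
    apply ContinuousLinearMap.ext
    intro v
    show (ContinuousLinearEquiv.unitsEquiv ℝ H1) ((hinv n hn).1.unit) v = A11 n v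
    rw [ContinuousLinearEquiv.unitsEquiv_apply]
    rw [IsUnit.unit_spec]
  · intro n hn
    simp only [dif_pos hn]
    apply ContinuousLinearMap.ext
    intro v
    show (ContinuousLinearEquiv.unitsEquiv ℝ H2) ((hinv n hn).2.unit) v = A22 n v
    rw [ContinuousLinearEquiv.unitsEquiv_apply]
    rw [IsUnit.unit_spec]


end
end
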